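/- arXiv:1801.04215 — 5 statements merged into one kernel-verified Lean document; each statement's English description precedes it below -/
import Mathlib

section
/- Let T be a nonnegative tensor and let σ, σ̃ be shape partitions of T with σ ⊑ σ̃. If T is σ-strictly nonnegative, then T is σ̃-strictly nonnegative. -/
open scoped BigOperators

namespace TensorPF

/-- A shape partition of the dimension vector `N : Fin m → ℕ` into `d` blocks.
`β` assigns to each index position its block, `rep i` is the minimal element `s_i`
of block `i`, and all positions in a block carry the same dimension. -/
structure ShapePartition (m d : ℕ) (N : Fin m → ℕ) where
  β : Fin m → Fin d
  surj : Function.Surjective β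
  rep : Fin d → Fin m
  rep_mem : ∀ i, β (rep i) = i
  rep_min : ∀ (i : Fin d) (j : Fin m), β j = i → rep i ≤ j
  dim_eq : ∀ j j' : Fin m, β j = β j' → N j = N j'

namespace ShapePartition

variable {m d : ℕ} {N : Fin m → ℕ}

/-- `n i = N (s_i)`, the common dimension of block `i`. -/
def n (σ : ShapePartition m d N) (i : Fin d) : ℕ := N (σ.rep i)

/-- `ν i = |σ_i|`, the size of block `i`. -/
def ν (σ : ShapePartition m d N) (i : Fin d) : ℕ :=
  (Finset.univ.filter (fun k => σ.β k = i)).card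

theorem dim_n (σ : ShapePartition m d N) (k : Fin m) : N k = σ.n (σ.β k) :=
  σ.dim_eq k (σ.rep (σ.β k)) (σ.rep_mem (σ.β k)).symm

/-- `x^[σ]` : the `m`-tuple of vectors whose `k`-th component is `x (β k)`. -/
def blowup (σ : ShapePartition m d N) (x : ∀ i, Fin (σ.n i) → ℝ) :
    ∀ k, Fin (N k) → ℝ :=
  fun k t => x (σ.β k) (Fin.cast (σ.dim_n k) t)

end ShapePartition

/-- The multilinear form `f_T(z) = Σ_J T_J ∏_k z_{k, J k}`. -/
def mform {m : ℕ} {N : Fin m → ℕ} (T : (∀ k, Fin (N k)) → ℝ)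
    (z : ∀ k, Fin (N k) → ℝ) : ℝ :=
  ∑ J : ∀ k, Fin (N k), T J * ∏ k, z k (J k)

/-- `𝒯_{k,j}(z)`, the partial derivative of `f_T` with respect to `z_{k,j}`. -/
def tmap {m : ℕ} {N : Fin m → ℕ} (T : (∀ k, Fin (N k)) → ℝ)
    (k : Fin m) (j : Fin (N k)) (z : ∀ l, Fin (N l) → ℝ) : ℝ :=
  ∑ J : ∀ l, Fin (N l),
    if J k = j then T J * ∏ l ∈ Finset.univ.erase k, z l (J l) else 0

/-- The `ℓ^q` norm of a vector. -/
noncomputable def pnorm {n : ℕ} (q : ℝ) (v : Fin n → ℝ) : ℝ :=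
  (∑ j, |v j| ^ q) ^ (1 / q)

/-- `ψ_q(v)_j = |v_j|^{q-2} v_j`. -/
noncomputable def psi {n : ℕ} (q : ℝ) (v : Fin n → ℝ) : Fin n → ℝ :=
  fun j => |v j| ^ (q - 2) * v j

/-- Spectral radius of a real matrix: the supremum of the moduli of its
complex eigenvalues. -/
noncomputable def rho {d : ℕ} (A : Matrix (Fin d) (Fin d) ℝ) : ℝ :=
  sSup {r : ℝ | ∃ μ : ℂ, μ ∈ spectrum ℂ (A.map (fun t : ℝ => (t : ℂ))) ∧ r = ‖μ‖}

/-- Hilbert projective (semi-)metric on positive vectors. -/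
noncomputable def hilbertDist {n : ℕ} (u v : Fin n → ℝ) : ℝ :=
  Real.log ((⨆ j, u j / v j) * (⨆ j, v j / u j))

namespace ShapePartition

variable {m d : ℕ} {N : Fin m → ℕ}

/-- The matrix `M` of Definition 2.5: the Jacobian of `x ↦ 𝒯_{s_i,t}(x^[σ])`
evaluated at the all-ones tuple. -/
noncomputable def Mmat (σ : ShapePartition m d N) (T : (∀ k, Fin (N k)) → ℝ) :
    (Σ i, Fin (σ.n i)) → (Σ i, Fin (σ.n i)) → ℝ :=
  fun a b =>
    fderiv ℝ (fun x : ∀ i, Fin (σ.n i) → ℝ => tmap T (σ.rep a.1) a.2 (σ.blowup x))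
      (fun _ _ => (1 : ℝ)) (Pi.single b.1 (Pi.single b.2 1))

/-- `T` is σ-strictly nonnegative: every row of `M` has a nonzero entry. -/
def StrictlyNonneg (σ : ShapePartition m d N) (T : (∀ k, Fin (N k)) → ℝ) : Prop :=
  ∀ a : Σ i, Fin (σ.n i), ∃ b : Σ i, Fin (σ.n i), σ.Mmat T a b ≠ 0

/-- `T` is σ-weakly irreducible: the matrix `M` is irreducible, i.e. the digraph
with an edge `a → b` whenever `M a b > 0` is strongly connected. -/
def WeaklyIrreducible (σ : ShapePartition m d N) (T : (∀ k, Fin (N k)) → ℝ) : Prop :=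
  ∀ a b : Σ i, Fin (σ.n i),
    Relation.TransGen (fun a b : Σ i, Fin (σ.n i) => 0 < σ.Mmat T a b) a b

/-- `T` is σ-strongly irreducible. -/
def StronglyIrreducible (σ : ShapePartition m d N) (T : (∀ k, Fin (N k)) → ℝ) : Prop :=
  ∀ x : ∀ i, Fin (σ.n i) → ℝ, (∀ i j, 0 ≤ x i j) → (∀ i, x i ≠ 0) →
    ¬ (∀ i j, 0 < x i j) →
    ∃ (k : Fin d) (l : Fin (σ.n k)), x k l = 0 ∧ 0 < tmap T (σ.rep k) l (σ.blowup x)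

/-- `T` is σ-symmetric: invariant under all block-preserving permutations
of the index positions. -/
def PartSymmetric (σ : ShapePartition m d N) (T : (∀ k, Fin (N k)) → ℝ) : Prop :=
  ∀ (π : Equiv.Perm (Fin m)) (hπ : ∀ k, σ.β (π k) = σ.β k) (J : ∀ k, Fin (N k)),
    T (fun k => Fin.cast (σ.dim_eq (π k) k (hπ k)) (J (π k))) = T J

/-- `(lam, x)` is a `(σ,p)`-eigenpair of `T`. -/
noncomputable def IsEigenpair (σ : ShapePartition m d N) (T : (∀ k, Fin (N k)) → ℝ)
    (p : Fin d → ℝ) (lam : ℝ) (x : ∀ i, Fin (σ.n i) → ℝ) : Prop :=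
  (∀ i, pnorm (p i) (x i) = 1) ∧
  ∀ (i : Fin d) (j : Fin (σ.n i)),
    tmap T (σ.rep i) j (σ.blowup x) = lam * psi (p i) (x i) j

/-- The `(σ,p)`-spectral radius `r^{(σ,p)}(T)`. -/
noncomputable def specRad (σ : ShapePartition m d N) (T : (∀ k, Fin (N k)) → ℝ)
    (p : Fin d → ℝ) : ℝ :=
  sSup {r : ℝ | ∃ lam x, σ.IsEigenpair T p lam x ∧ r = |lam|}

/-- The homogeneity matrix `A(σ,p) = diag(p₁'-1,…,p_d'-1)(ν 1ᵀ - I)`. -/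
noncomputable def Amat (σ : ShapePartition m d N) (p : Fin d → ℝ) :
    Matrix (Fin d) (Fin d) ℝ :=
  Matrix.of fun i j => (p i / (p i - 1) - 1) * ((σ.ν i : ℝ) - if i = j then 1 else 0)

/-- The multi-homogeneous map `F^{(σ,p)}`. -/
noncomputable def Fmap (σ : ShapePartition m d N) (T : (∀ k, Fin (N k)) → ℝ)
    (p : Fin d → ℝ) (x : ∀ i, Fin (σ.n i) → ℝ) : ∀ i, Fin (σ.n i) → ℝ :=
  fun i j => (tmap T (σ.rep i) j (σ.blowup x)) ^ (p i / (p i - 1) - 1)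

/-- The map `G^{(σ,p)}_{i,j}(x) = sqrt(x_{i,j} F^{(σ,p)}_{i,j}(x))`. -/
noncomputable def Gmap (σ : ShapePartition m d N) (T : (∀ k, Fin (N k)) → ℝ)
    (p : Fin d → ℝ) (x : ∀ i, Fin (σ.n i) → ℝ) : ∀ i, Fin (σ.n i) → ℝ :=
  fun i j => Real.sqrt (x i j * σ.Fmap T p x i j)

/-- The upper Collatz–Wielandt function `čw`. -/
noncomputable def cwMax (σ : ShapePartition m d N) (b : Fin d → ℝ) (γ : ℝ)
    (H x : ∀ i, Fin (σ.n i) → ℝ) : ℝ :=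
  ∏ i, (⨆ j : Fin (σ.n i), H i j / x i j) ^ ((γ - 1) * b i)

/-- The lower Collatz–Wielandt function `ĉw`. -/
noncomputable def cwMin (σ : ShapePartition m d N) (b : Fin d → ℝ) (γ : ℝ)
    (H x : ∀ i, Fin (σ.n i) → ℝ) : ℝ :=
  ∏ i, (⨅ j ∈ {j : Fin (σ.n i) | 0 < x i j}, H i j / x i j) ^ ((γ - 1) * b i)

/-- The weighted Hilbert metric `μ_b`. -/
noncomputable def muB (σ : ShapePartition m d N) (b : Fin d → ℝ)
    (x y : ∀ i, Fin (σ.n i) → ℝ) : ℝ :=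
  ∑ i, b i * hilbertDist (x i) (y i)

/-- The Rayleigh quotient `Φ`. -/
noncomputable def rayleigh (σ : ShapePartition m d N) (T : (∀ k, Fin (N k)) → ℝ)
    (p : Fin d → ℝ) (x : ∀ i, Fin (σ.n i) → ℝ) : ℝ :=
  mform T (σ.blowup x) / ∏ i, pnorm (p i) (x i) ^ (σ.ν i)

/-- The tensor norm `‖T‖_{(σ,p)}`. -/
noncomputable def tnorm (σ : ShapePartition m d N) (T : (∀ k, Fin (N k)) → ℝ)
    (p : Fin d → ℝ) : ℝ :=
  sSup {r : ℝ | ∃ x : ∀ i, Fin (σ.n i) → ℝ, (∀ i, x i ≠ 0) ∧ r = |σ.rayleigh T p x|}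

end ShapePartition



section Aux

lemma single_sigma_eval {d : ℕ} {n : Fin d → ℕ} (b : Σ i, Fin (n i)) (i : Fin d) (t : Fin (n i)) :
    Pi.single (M := fun i => Fin (n i) → ℝ) b.1 (Pi.single b.2 (1:ℝ)) i t
      = if (⟨i, t⟩ : Σ i, Fin (n i)) = b then 1 else 0 := by
  classical
  obtain ⟨b1, b2⟩ := b
  by_cases h1 : i = b1
  · subst h1
    rw [Pi.single_eq_same]
    simp [Pi.single_apply, Sigma.mk.inj_iff, eq_comm]
  · rw [Pi.single_eq_of_ne h1]
    simp [Sigma.mk.inj_iff, h1]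

open ShapePartition in
lemma Mmat_eq_formula {m d : ℕ} {N : Fin m → ℕ} (σ : ShapePartition m d N)
    (T : (∀ k, Fin (N k)) → ℝ) (a b : Σ i, Fin (σ.n i)) :
    σ.Mmat T a b = ∑ J : ∀ k, Fin (N k),
      @ite _ (J (σ.rep a.1) = a.2) (instDecidableEqFin _ _ _) (
        T J * (((Finset.univ.erase (σ.rep a.1)).filter
          (fun l => (⟨σ.β l, Fin.cast (σ.dim_n l) (J l)⟩ : Σ i, Fin (σ.n i)) = b)).card : ℝ))
      0 := by
  classical
  set E := (∀ i, Fin (σ.n i) → ℝ) with hE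
  set k := σ.rep a.1 with hk
  set o : E := (fun _ _ => (1:ℝ)) with ho
  set clm : (∀ l, Fin (N l)) → Fin m → (E →L[ℝ] ℝ) := fun J l =>
    (ContinuousLinearMap.proj (Fin.cast (σ.dim_n l) (J l))).comp
      (ContinuousLinearMap.proj (σ.β l) : E →L[ℝ] (Fin (σ.n (σ.β l)) → ℝ)) with hclm
  set D : (∀ l, Fin (N l)) → (E →L[ℝ] ℝ) := fun J =>
    if J k = a.2 then
      (T J) • (∑ l ∈ Finset.univ.erase k,
        (∏ l' ∈ (Finset.univ.erase k).erase l, o (σ.β l') (Fin.cast (σ.dim_n l') (J l'))) •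
          clm J l)
    else 0 with hD
  have hfd : HasFDerivAt (fun x : E => tmap T k a.2 (σ.blowup x))
      (∑ J : ∀ l, Fin (N l), D J) o := by
    have hfun : (fun x : E => tmap T k a.2 (σ.blowup x)) =
        fun x => ∑ J : ∀ l, Fin (N l), @ite _ (J k = a.2) (instDecidableEqFin _ _ _)
          (T J * ∏ l ∈ Finset.univ.erase k, x (σ.β l) (Fin.cast (σ.dim_n l) (J l))) 0 := rfl
    rw [hfun]
    apply HasFDerivAt.fun_sum
    intro J _
    have hprod : HasFDerivAt
        (fun x : E => ∏ l ∈ Finset.univ.erase k, x (σ.β l) (Fin.cast (σ.dim_n l) (J l)))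
        (∑ l ∈ Finset.univ.erase k,
          (∏ l' ∈ (Finset.univ.erase k).erase l, o (σ.β l') (Fin.cast (σ.dim_n l') (J l'))) •
            clm J l) o :=
      HasFDerivAt.finset_prod (fun l _ => (clm J l).hasFDerivAt)
    by_cases hc : J k = a.2
    · simp only [hD, if_pos hc]
      exact hprod.const_mul (T J)
    · simp only [hD, if_neg hc]
      exact hasFDerivAt_const 0 _
  have hM : σ.Mmat T a b = (∑ J : ∀ l, Fin (N l), D J)
      (Pi.single b.1 (Pi.single b.2 1)) := by
    unfold ShapePartition.Mmat
    rw [hfd.fderiv]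
  rw [hM, ContinuousLinearMap.sum_apply]
  apply Finset.sum_congr rfl
  intro J _
  by_cases hc : J k = a.2
  · rw [hD]
    simp only [if_pos hc, if_pos (show @Eq (Fin (N (σ.rep a.1))) (J (σ.rep a.1)) a.2 from hc)]
    rw [ContinuousLinearMap.smul_apply, ContinuousLinearMap.sum_apply]
    have h1 : ∀ l, (∏ l' ∈ (Finset.univ.erase k).erase l,
        o (σ.β l') (Fin.cast (σ.dim_n l') (J l'))) = 1 := by
      intro l; simp [ho]
    simp only [h1, one_smul, hclm, ContinuousLinearMap.comp_apply,
      ContinuousLinearMap.proj_apply]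
    rw [smul_eq_mul]
    congr 1
    rw [← Finset.sum_boole]
    apply Finset.sum_congr rfl
    intro l _
    exact single_sigma_eval b (σ.β l) (Fin.cast (σ.dim_n l) (J l))
  · rw [hD]
    simp only [if_neg hc, if_neg (show ¬ @Eq (Fin (N (σ.rep a.1))) (J (σ.rep a.1)) a.2 from hc),
      ContinuousLinearMap.zero_apply]

end Aux

/-- If `σ ⊑ σ̃` and `T` is σ-strictly nonnegative, then `T` is
σ̃-strictly nonnegative. -/
theorem strictlyNonneg_of_refines
    {m d d' : ℕ} (hm : 0 < m) {N : Fin m → ℕ} (hN : ∀ k, 0 < N k)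
    (T : (∀ k, Fin (N k)) → ℝ) (hT : ∀ J, 0 ≤ T J)
    (σ : ShapePartition m d N) (σ' : ShapePartition m d' N)
    (hd : d' ≤ d) (π : Fin d → Fin d') (hπ : ∀ j : Fin m, π (σ.β j) = σ'.β j)
    (h : σ.StrictlyNonneg T) : σ'.StrictlyNonneg T := by
  classical
  intro a'
  obtain ⟨i', t'⟩ := a'
  have hβ' : σ'.β (σ'.rep i') = i' := σ'.rep_mem i'
  set i : Fin d := σ.β (σ'.rep i') with hi
  have hπi : π i = i' := by rw [hi, hπ, hβ']
  have hrep : σ.rep i = σ'.rep i' := by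
    apply le_antisymm (σ.rep_min i (σ'.rep i') hi.symm)
    apply σ'.rep_min i' (σ.rep i)
    rw [← hπ, σ.rep_mem, hπi]
  have hn : σ'.n i' = σ.n i := by
    show N (σ'.rep i') = N (σ.rep i)
    rw [hrep]
  obtain ⟨b, hb⟩ := h ⟨i, Fin.cast hn t'⟩
  rw [Mmat_eq_formula] at hb
  obtain ⟨J, -, hJ⟩ := Finset.exists_ne_zero_of_sum_ne_zero hb
  have hcond : J (σ.rep i) = Fin.cast hn t' := by
    by_contra hc; simp only [if_neg hc, ne_eq, not_true_eq_false] at hJ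
  rw [if_pos hcond] at hJ
  have hTJ : 0 < T J := by
    rcases (hT J).lt_or_eq with h' | h'
    · exact h'
    · exact absurd (by rw [← h', zero_mul]) hJ
  have hne : ((Finset.univ.erase (σ.rep i)).filter
      (fun l => (⟨σ.β l, Fin.cast (σ.dim_n l) (J l)⟩ : Σ j, Fin (σ.n j)) = b)).Nonempty := by
    rw [← Finset.card_pos, Nat.pos_iff_ne_zero]
    intro hc
    rw [hc] at hJ
    simp at hJ
  obtain ⟨l', hl'⟩ := hne
  rw [Finset.mem_filter, Finset.mem_erase] at hl'
  obtain ⟨⟨hlk, -⟩, -⟩ := hl'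
  refine ⟨⟨σ'.β l', Fin.cast (σ'.dim_n l') (J l')⟩, ?_⟩
  rw [Mmat_eq_formula]
  have hcond' : J (σ'.rep i') = t' := by
    apply Fin.ext
    have hv : (J (σ.rep i)).val = (J (σ'.rep i')).val :=
      congrArg (fun k => (J k).val) hrep
    rw [← hv, hcond, Fin.coe_cast]
  have hmem : l' ∈ (Finset.univ.erase (σ'.rep i')).filter
      (fun l => (⟨σ'.β l, Fin.cast (σ'.dim_n l) (J l)⟩ : Σ j, Fin (σ'.n j)) =
        (⟨σ'.β l', Fin.cast (σ'.dim_n l') (J l')⟩ : Σ j, Fin (σ'.n j))) := by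
    rw [Finset.mem_filter, Finset.mem_erase]
    refine ⟨⟨?_, Finset.mem_univ _⟩, rfl⟩
    rw [← hrep]; exact hlk
  have hpos : 0 < ∑ K : ∀ k, Fin (N k),
      @ite _ (K (σ'.rep i') = t') (instDecidableEqFin _ _ _) (
        T K * (((Finset.univ.erase (σ'.rep i')).filter
          (fun l => (⟨σ'.β l, Fin.cast (σ'.dim_n l) (K l)⟩ : Σ j, Fin (σ'.n j)) =
            (⟨σ'.β l', Fin.cast (σ'.dim_n l') (J l')⟩ : Σ j, Fin (σ'.n j)))).card : ℝ))
      0 := by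
    apply Finset.sum_pos'
    · intro K _
      split
      · exact mul_nonneg (hT K) (Nat.cast_nonneg _)
      · exact le_refl 0
    · refine ⟨J, Finset.mem_univ _, ?_⟩
      rw [if_pos hcond']
      apply mul_pos hTJ
      have : 0 < ((Finset.univ.erase (σ'.rep i')).filter
          (fun l => (⟨σ'.β l, Fin.cast (σ'.dim_n l) (J l)⟩ : Σ j, Fin (σ'.n j)) =
            (⟨σ'.β l', Fin.cast (σ'.dim_n l') (J l')⟩ : Σ j, Fin (σ'.n j)))).card :=
        Finset.card_pos.mpr ⟨l', hmem⟩
      exact_mod_cast this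
  exact ne_of_gt hpos

end TensorPF
end

section
/- Let T be a nonnegative tensor and let σ, σ̃ be shape partitions of T with σ ⊑ σ̃. If T is σ-weakly irreducible and T is σ̃-symmetric, then T is σ̃-weakly irreducible. -/
open scoped BigOperators

namespace TensorPF

namespace ShapePartition
variable {m d : ℕ} {N : Fin m → ℕ}

noncomputable def Lmat (σ : ShapePartition m d N) (T : (∀ k, Fin (N k)) → ℝ)
    (s : Fin m) (t : Fin (N s)) : (∀ i, Fin (σ.n i) → ℝ) →L[ℝ] ℝ :=
  ∑ J : ∀ l, Fin (N l), if J s = t then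
      T J • (∑ l ∈ Finset.univ.erase s,
        (ContinuousLinearMap.proj (Fin.cast (σ.dim_n l) (J l))).comp
          (ContinuousLinearMap.proj (σ.β l) :
            (∀ i, Fin (σ.n i) → ℝ) →L[ℝ] (Fin (σ.n (σ.β l)) → ℝ)))
    else 0

theorem hasFDerivAt_tmap_blowup (σ : ShapePartition m d N) (T : (∀ k, Fin (N k)) → ℝ)
    (s : Fin m) (t : Fin (N s)) :
    HasFDerivAt (fun x : ∀ i, Fin (σ.n i) → ℝ => tmap T s t (σ.blowup x))
      (σ.Lmat T s t) (fun _ _ => (1 : ℝ)) := by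
  have he : (fun x : ∀ i, Fin (σ.n i) → ℝ => tmap T s t (σ.blowup x))
      = fun x => ∑ J : ∀ l, Fin (N l), if J s = t then
          T J * ∏ l ∈ Finset.univ.erase s, x (σ.β l) (Fin.cast (σ.dim_n l) (J l)) else 0 := rfl
  rw [he, Lmat]
  refine HasFDerivAt.fun_sum (𝕜 := ℝ) (fun J _ => ?_)
  by_cases hJ : J s = t
  · simp only [if_pos hJ]
    have hp := HasFDerivAt.finset_prod (𝕜 := ℝ) (u := Finset.univ.erase s)
      (g := fun l (x : ∀ i, Fin (σ.n i) → ℝ) => x (σ.β l) (Fin.cast (σ.dim_n l) (J l)))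
      (g' := fun l => (ContinuousLinearMap.proj (Fin.cast (σ.dim_n l) (J l))).comp
          (ContinuousLinearMap.proj (σ.β l) :
            (∀ i, Fin (σ.n i) → ℝ) →L[ℝ] (Fin (σ.n (σ.β l)) → ℝ)))
      (x := fun _ _ => (1 : ℝ))
      (fun l _ => by exact ((ContinuousLinearMap.proj (Fin.cast (σ.dim_n l) (J l))).comp
          (ContinuousLinearMap.proj (σ.β l) :
            (∀ i, Fin (σ.n i) → ℝ) →L[ℝ] (Fin (σ.n (σ.β l)) → ℝ))).hasFDerivAt)
    simp only [Finset.prod_const_one, one_smul] at hp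
    exact hp.const_mul (T J)
  · simp only [if_neg hJ]
    exact hasFDerivAt_const 0 _

open Classical in
theorem mmat_apply (σ : ShapePartition m d N) (T : (∀ k, Fin (N k)) → ℝ)
    (a b : Σ i, Fin (σ.n i)) :
    σ.Mmat T a b = ∑ J : ∀ l, Fin (N l),
      if J (σ.rep a.1) = a.2 then
        T J * ∑ l ∈ Finset.univ.erase (σ.rep a.1),
          (Pi.single b.1 (Pi.single b.2 (1:ℝ)) : ∀ i, Fin (σ.n i) → ℝ)
            (σ.β l) (Fin.cast (σ.dim_n l) (J l))
      else 0 := by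
  have := (σ.hasFDerivAt_tmap_blowup T (σ.rep a.1) a.2).fderiv
  rw [Mmat, this]; unfold Lmat
  simp [ContinuousLinearMap.sum_apply, apply_ite
    (fun f : (∀ i, Fin (σ.n i) → ℝ) →L[ℝ] ℝ => f (Pi.single b.1 (Pi.single b.2 1)))]

theorem single_single {σ : ShapePartition m d N} (b : Σ i, Fin (σ.n i))
    (i : Fin d) (j : Fin (σ.n i)) :
    (Pi.single b.1 (Pi.single b.2 (1:ℝ)) : ∀ i, Fin (σ.n i) → ℝ) i j
      = if (⟨i, j⟩ : Σ i, Fin (σ.n i)) = b then 1 else 0 := by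
  obtain ⟨b1, b2⟩ := b
  by_cases h : i = b1
  · subst h
    rw [Pi.single_eq_same, Pi.single_apply]
    congr 1
    simp [Sigma.mk.inj_iff]
  · rw [Pi.single_eq_of_ne h]
    simp [Sigma.mk.inj_iff, h]

open Classical in
theorem mmat_pos_iff (σ : ShapePartition m d N) {T : (∀ k, Fin (N k)) → ℝ}
    (hT : ∀ J, 0 ≤ T J) (i : Fin d) (t : Fin (σ.n i)) (b : Σ i, Fin (σ.n i)) :
    0 < σ.Mmat T ⟨i, t⟩ b ↔ ∃ (J : ∀ l, Fin (N l)) (l : Fin m), 0 < T J ∧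
      J (σ.rep i) = t ∧ l ≠ σ.rep i ∧
      (⟨σ.β l, Fin.cast (σ.dim_n l) (J l)⟩ : Σ i, Fin (σ.n i)) = b := by
  have hvnn : ∀ (i : Fin d) (j : Fin (σ.n i)),
      0 ≤ (Pi.single b.1 (Pi.single b.2 (1:ℝ)) : ∀ i, Fin (σ.n i) → ℝ) i j := by
    intro i j; rw [single_single]; split <;> norm_num
  rw [mmat_apply σ T ⟨i, t⟩ b]
  constructor
  · intro hpos
    obtain ⟨J, hJ⟩ : ∃ J : ∀ l, Fin (N l), 0 <
        (if J (σ.rep i) = t then T J * ∑ l ∈ Finset.univ.erase (σ.rep i),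
          (Pi.single b.1 (Pi.single b.2 (1:ℝ)) : ∀ i, Fin (σ.n i) → ℝ)
            (σ.β l) (Fin.cast (σ.dim_n l) (J l)) else 0) := by
      by_contra hc
      push_neg at hc
      have := Finset.sum_nonpos (s := (Finset.univ : Finset (∀ l, Fin (N l))))
        (fun J _ => hc J)
      linarith
    by_cases hc : J (σ.rep i) = t
    · rw [if_pos hc] at hJ
      rcases mul_pos_iff.mp hJ with ⟨h1, h2⟩ | ⟨h1, h2⟩
      · obtain ⟨l, hlmem, hlpos⟩ : ∃ l ∈ Finset.univ.erase (σ.rep i),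
            0 < (Pi.single b.1 (Pi.single b.2 (1:ℝ)) : ∀ i, Fin (σ.n i) → ℝ)
              (σ.β l) (Fin.cast (σ.dim_n l) (J l)) := by
          by_contra hc2
          push_neg at hc2
          have := Finset.sum_nonpos (fun l hl => (hc2 l hl))
          linarith
        rw [single_single] at hlpos
        refine ⟨J, l, h1, hc, (Finset.mem_erase.mp hlmem).1, ?_⟩
        by_contra hne
        rw [if_neg hne] at hlpos
        exact lt_irrefl 0 hlpos
      · exact absurd h1 (not_lt.mpr (hT J))
    · rw [if_neg hc] at hJ
      exact absurd hJ (lt_irrefl 0)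
  · rintro ⟨J, l, hTJ, hJs, hl, hsig⟩
    apply Finset.sum_pos'
    · intro J' _
      split
      · exact mul_nonneg (hT J') (Finset.sum_nonneg fun l' _ => hvnn _ _)
      · exact le_refl 0
    · refine ⟨J, Finset.mem_univ J, ?_⟩
      rw [if_pos hJs]
      refine mul_pos hTJ (Finset.sum_pos' (fun l' _ => hvnn _ _)
        ⟨l, Finset.mem_erase.mpr ⟨hl, Finset.mem_univ l⟩, ?_⟩)
      rw [single_single, if_pos hsig]
      norm_num

theorem edge_transfer {d' : ℕ} {T : (∀ k, Fin (N k)) → ℝ} (hT : ∀ J, 0 ≤ T J)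
    (σ : ShapePartition m d N) (σ' : ShapePartition m d' N)
    (π : Fin d → Fin d') (hπ : ∀ j : Fin m, π (σ.β j) = σ'.β j)
    (hsym : σ'.PartSymmetric T)
    (hcast : ∀ i, σ.n i = σ'.n (π i))
    (a b : Σ i, Fin (σ.n i)) (hab : 0 < σ.Mmat T a b) :
    0 < σ'.Mmat T ⟨π a.1, Fin.cast (hcast a.1) a.2⟩ ⟨π b.1, Fin.cast (hcast b.1) b.2⟩ := by
  obtain ⟨a1, a2⟩ := a
  obtain ⟨b1, b2⟩ := b
  rw [mmat_pos_iff σ hT] at hab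
  rw [mmat_pos_iff σ' hT]
  obtain ⟨J, l, hTJ, hJs, hl, hsig⟩ := hab
  rw [Sigma.mk.inj_iff] at hsig
  obtain ⟨hβl, hheq⟩ := hsig
  have hJlval : ((J l : Fin (N l)) : ℕ) = (b2 : ℕ) := by
    have := (Fin.heq_ext_iff (congrArg σ.n hβl)).mp hheq
    simpa using this
  have hrepβ : ∀ i : Fin d, σ'.β (σ.rep i) = π i := fun i => by
    rw [← hπ (σ.rep i), σ.rep_mem]
  have hβss' : σ'.β (σ.rep a1) = σ'.β (σ'.rep (π a1)) := by
    rw [hrepβ, σ'.rep_mem]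
  set τ : Equiv.Perm (Fin m) := Equiv.swap (σ.rep a1) (σ'.rep (π a1)) with hτdef
  have hτ : ∀ k, σ'.β (τ k) = σ'.β k := by
    intro k
    rcases eq_or_ne k (σ.rep a1) with rfl | h1
    · rw [hτdef, Equiv.swap_apply_left, ← hβss']
    · rcases eq_or_ne k (σ'.rep (π a1)) with rfl | h2
      · rw [hτdef, Equiv.swap_apply_right, hβss']
      · rw [hτdef, Equiv.swap_apply_of_ne_of_ne h1 h2]
  refine ⟨fun k => Fin.cast (σ'.dim_eq (τ k) k (hτ k)) (J (τ k)), ?_⟩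
  have hTJ' : 0 < T (fun k => Fin.cast (σ'.dim_eq (τ k) k (hτ k)) (J (τ k))) := by
    rw [hsym τ hτ J]; exact hTJ
  have hJ's' : Fin.cast (σ'.dim_eq (τ (σ'.rep (π a1))) (σ'.rep (π a1))
        (hτ (σ'.rep (π a1)))) (J (τ (σ'.rep (π a1)))) = Fin.cast (hcast a1) a2 := by
    apply Fin.ext
    have hτs' : τ (σ'.rep (π a1)) = σ.rep a1 := Equiv.swap_apply_right _ _
    have hv : ((J (τ (σ'.rep (π a1)))) : ℕ) = ((J (σ.rep a1)) : ℕ) := by rw [hτs']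
    simp only [Fin.coe_cast, hv, hJs]
  by_cases hls' : l = σ'.rep (π a1)
  · refine ⟨σ.rep a1, hTJ', hJ's', ?_, ?_⟩
    · intro hss'
      exact hl (by rw [hls', ← hss'])
    · have hfst : σ'.β (σ.rep a1) = π b1 := by
        rw [hβss', ← hls', ← hπ l, hβl]
      refine Sigma.ext hfst ((Fin.heq_ext_iff (congrArg σ'.n hfst)).mpr ?_)
      have hτs : τ (σ.rep a1) = l := by rw [hτdef, Equiv.swap_apply_left, hls']
      have hv : ((J (τ (σ.rep a1))) : ℕ) = ((J l) : ℕ) := by rw [hτs]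
      simp only [Fin.coe_cast, hv, hJlval]
  · refine ⟨l, hTJ', hJ's', hls', ?_⟩
    · have hfst : σ'.β l = π b1 := by rw [← hπ l, hβl]
      refine Sigma.ext hfst ((Fin.heq_ext_iff (congrArg σ'.n hfst)).mpr ?_)
      have hτl : τ l = l := by
        rw [hτdef, Equiv.swap_apply_of_ne_of_ne hl hls']
      have hv : ((J (τ l)) : ℕ) = ((J l) : ℕ) := by rw [hτl]
      simp only [Fin.coe_cast, hv, hJlval]


end ShapePartition

/-- If `σ ⊑ σ̃`, `T` is σ-weakly irreducible and σ̃-symmetric,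
then `T` is σ̃-weakly irreducible. -/
theorem weaklyIrreducible_of_refines
    {m d d' : ℕ} (hm : 0 < m) {N : Fin m → ℕ} (hN : ∀ k, 0 < N k)
    (T : (∀ k, Fin (N k)) → ℝ) (hT : ∀ J, 0 ≤ T J)
    (σ : ShapePartition m d N) (σ' : ShapePartition m d' N)
    (hd : d' ≤ d) (π : Fin d → Fin d') (hπ : ∀ j : Fin m, π (σ.β j) = σ'.β j)
    (hsym : σ'.PartSymmetric T)
    (h : σ.WeaklyIrreducible T) : σ'.WeaklyIrreducible T := by
  have hcast : ∀ i : Fin d, σ.n i = σ'.n (π i) := fun i => by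
    have h1 := σ'.dim_n (σ.rep i)
    rwa [show σ'.β (σ.rep i) = π i from by rw [← hπ (σ.rep i), σ.rep_mem]] at h1
  have hsurj : ∀ c : Σ i', Fin (σ'.n i'), ∃ a : Σ i, Fin (σ.n i),
      (⟨π a.1, Fin.cast (hcast a.1) a.2⟩ : Σ i', Fin (σ'.n i')) = c := by
    rintro ⟨i', t'⟩
    obtain ⟨j, hj⟩ := σ'.surj i'
    have hi : π (σ.β j) = i' := by rw [hπ j, hj]
    subst hi
    refine ⟨⟨σ.β j, Fin.cast (hcast (σ.β j)).symm t'⟩, ?_⟩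
    refine Sigma.ext rfl ((Fin.heq_ext_iff rfl).mpr ?_)
    simp
  intro a' b'
  obtain ⟨a, rfl⟩ := hsurj a'
  obtain ⟨b, rfl⟩ := hsurj b'
  exact Relation.TransGen.lift (p := fun a b : Σ i', Fin (σ'.n i') => 0 < σ'.Mmat T a b)
    (fun a : Σ i, Fin (σ.n i) => (⟨π a.1, Fin.cast (hcast a.1) a.2⟩ : Σ i', Fin (σ'.n i')))
    (fun a b hab => ShapePartition.edge_transfer hT σ σ' π hπ hsym hcast a b hab) a b (h a b)


end TensorPF
end

section
/- Let T be a nonnegative tensor and let σ, σ̃ be shape partitions of T with σ ⊑ σ̃. If T is σ-strongly irreducible and T is σ̃-symmetric, then T is σ̃-strongly irreducible. -/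
open scoped BigOperators

namespace TensorPF

theorem fin_app_congr {α : Type*} {n : α → ℕ} (f : ∀ a, Fin (n a) → ℝ)
    {a b : α} (h : a = b) {u : Fin (n a)} {v : Fin (n b)} (hv : (u : ℕ) = (v : ℕ)) :
    f a u = f b v := by subst h; congr 1; exact Fin.ext hv

theorem tmap_congr_block {m d' : ℕ} {N : Fin m → ℕ}
    (σ' : ShapePartition m d' N) (T : (∀ k, Fin (N k)) → ℝ)
    (hsym : σ'.PartSymmetric T)
    (x : ∀ i, Fin (σ'.n i) → ℝ)
    (k1 k2 : Fin m) (hb : σ'.β k1 = σ'.β k2) (j : Fin (N k1)) :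
    tmap T k1 j (σ'.blowup x)
      = tmap T k2 (Fin.cast (σ'.dim_eq k1 k2 hb) j) (σ'.blowup x) := by
  classical
  have hβe : ∀ k, σ'.β (Equiv.swap k1 k2 k) = σ'.β k := by
    intro k
    rcases eq_or_ne k k1 with rfl | h1
    · rw [Equiv.swap_apply_left]; exact hb.symm
    rcases eq_or_ne k k2 with rfl | h2
    · rw [Equiv.swap_apply_right]; exact hb
    · rw [Equiv.swap_apply_of_ne_of_ne h1 h2]
  set Φ : (∀ k, Fin (N k)) → (∀ k, Fin (N k)) :=
    fun J k => Fin.cast (σ'.dim_eq (Equiv.swap k1 k2 k) k (hβe k)) (J (Equiv.swap k1 k2 k))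
    with hΦ
  have hinv : Function.Involutive Φ := by
    intro J; funext k; apply Fin.ext
    show ((J (Equiv.swap k1 k2 (Equiv.swap k1 k2 k))) : ℕ) = ((J k) : ℕ)
    rw [Equiv.swap_apply_self]
  have key : ∀ J : ∀ l, Fin (N l),
      (if Φ J k1 = j then T (Φ J) * ∏ l ∈ Finset.univ.erase k1, σ'.blowup x l (Φ J l) else 0)
      = (if J k2 = Fin.cast (σ'.dim_eq k1 k2 hb) j then
          T J * ∏ l ∈ Finset.univ.erase k2, σ'.blowup x l (J l) else 0) := by
    intro J
    have hcond : (Φ J k1 = j) ↔ (J k2 = Fin.cast (σ'.dim_eq k1 k2 hb) j) := by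
      rw [Fin.ext_iff, Fin.ext_iff]
      simp only [hΦ, Fin.coe_cast]
      rw [Equiv.swap_apply_left]
    have hT' : T (Φ J) = T J := hsym (Equiv.swap k1 k2) hβe J
    have hterm : ∀ l, σ'.blowup x l (Φ J l)
        = σ'.blowup x (Equiv.swap k1 k2 l) (J (Equiv.swap k1 k2 l)) := by
      intro l
      unfold ShapePartition.blowup
      exact fin_app_congr x (hβe l).symm (by simp [hΦ])
    have hprod : ∏ l ∈ Finset.univ.erase k1, σ'.blowup x l (Φ J l)
        = ∏ l ∈ Finset.univ.erase k2, σ'.blowup x l (J l) := by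
      rw [Finset.prod_congr rfl (fun l _ => hterm l)]
      refine Finset.prod_nbij' (fun l => Equiv.swap k1 k2 l) (fun l => Equiv.swap k1 k2 l)
        ?_ ?_ ?_ ?_ ?_
      · intro a ha
        simp only [Finset.mem_erase, Finset.mem_univ, and_true] at ha ⊢
        intro hcon
        exact ha (by simpa using congrArg (Equiv.swap k1 k2) (hcon.trans (Equiv.swap_apply_left k1 k2).symm))
      · intro a ha
        simp only [Finset.mem_erase, Finset.mem_univ, and_true] at ha ⊢
        intro hcon
        exact ha (by simpa using congrArg (Equiv.swap k1 k2) (hcon.trans (Equiv.swap_apply_right k1 k2).symm))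
      · intro a _; exact Equiv.swap_apply_self k1 k2 a
      · intro a _; exact Equiv.swap_apply_self k1 k2 a
      · intro a _; rfl
    simp only [hT', hprod, hcond]
  unfold tmap
  exact (Fintype.sum_equiv ⟨Φ, Φ, hinv.leftInverse, hinv.rightInverse⟩ _ _ (fun J => (key J).symm)).symm

/-- If `σ ⊑ σ̃`, `T` is σ-strongly irreducible and σ̃-symmetric,
then `T` is σ̃-strongly irreducible. -/
theorem stronglyIrreducible_of_refines
    {m d d' : ℕ} (hm : 0 < m) {N : Fin m → ℕ} (hN : ∀ k, 0 < N k)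
    (T : (∀ k, Fin (N k)) → ℝ) (hT : ∀ J, 0 ≤ T J)
    (σ : ShapePartition m d N) (σ' : ShapePartition m d' N)
    (hd : d' ≤ d) (π : Fin d → Fin d') (hπ : ∀ j : Fin m, π (σ.β j) = σ'.β j)
    (hsym : σ'.PartSymmetric T)
    (h : σ.StronglyIrreducible T) : σ'.StronglyIrreducible T := by
  classical
  intro x hx hx0 hxpos
  have hdim : ∀ i : Fin d, σ.n i = σ'.n (π i) := by
    intro i
    have h1 : σ'.β (σ.rep i) = σ'.β (σ'.rep (π i)) := by
      rw [σ'.rep_mem (π i), ← hπ (σ.rep i), σ.rep_mem i]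
    exact σ'.dim_eq _ _ h1
  set y : ∀ i, Fin (σ.n i) → ℝ := fun i t => x (π i) (Fin.cast (hdim i) t) with hy
  have hy_nonneg : ∀ i j, 0 ≤ y i j := fun i j => hx _ _
  have hy_ne : ∀ i, y i ≠ 0 := by
    intro i hcon
    apply hx0 (π i)
    funext t
    have h2 := congrFun hcon (Fin.cast (hdim i).symm t)
    simpa [hy, Fin.ext_iff] using h2
  have hπsurj : Function.Surjective π := by
    intro i'
    obtain ⟨k, hk⟩ := σ'.surj i'
    exact ⟨σ.β k, by rw [hπ k, hk]⟩
  have hy_npos : ¬ ∀ i j, 0 < y i j := by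
    intro hall
    apply hxpos
    intro i' j'
    obtain ⟨i, rfl⟩ := hπsurj i'
    have h2 := hall i (Fin.cast (hdim i).symm j')
    have h3 : y i (Fin.cast (hdim i).symm j') = x (π i) j' := by
      simp [hy]
    rwa [h3] at h2
  obtain ⟨k, l, hl0, hlpos⟩ := h y hy_nonneg hy_ne hy_npos
  have hblow : σ.blowup y = σ'.blowup x := by
    funext k t
    simp only [ShapePartition.blowup, hy]
    exact fin_app_congr x (hπ k) (by simp)
  have h1 : σ'.β (σ.rep k) = σ'.β (σ'.rep (π k)) := by
    rw [σ'.rep_mem (π k), ← hπ (σ.rep k), σ.rep_mem k]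
  refine ⟨π k, Fin.cast (hdim k) l, by simpa [hy] using hl0, ?_⟩
  rw [hblow] at hlpos
  have h2 := tmap_congr_block σ' T hsym x (σ.rep k) (σ'.rep (π k)) h1 l
  rw [h2] at hlpos
  exact hlpos

end TensorPF
end

section
/- Let T ∈ ℝ^{N_1×⋯×N_m} be a tensor, σ = {σ_1,…,σ_d} a shape partition of T, and p ∈ (1,∞)^d. If T is σ-symmetric, then every (σ,p)-eigenvector of T is a critical point of the Rayleigh quotient Φ (the gradient of Φ vanishes there), with critical value equal to the corresponding (σ,p)-eigenvalue; moreover ‖T‖_{(σ,p)} = r^{(σ,p)}(T). -/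
open scoped BigOperators

namespace TensorPF

section PFProofs
open Real Filter Topology

lemma rpow_sub_one_eq {a q : ℝ} (ha : 0 < a) : a ^ (q - 1) = a ^ (q - 2) * a := by
  have h := Real.rpow_add ha (q - 2) 1
  rw [Real.rpow_one] at h
  rw [show q - 1 = q - 2 + 1 by ring, h]

lemma aux_hasDerivAt_abs_rpow {q : ℝ} (hq : 1 < q) (t : ℝ) :
    HasDerivAt (fun s : ℝ => |s| ^ q) (q * |t| ^ (q - 2) * t) t := by
  rcases lt_trichotomy t 0 with ht | rfl | ht
  · have h1 : HasDerivAt (fun s : ℝ => (-s) ^ q) (q * (-t) ^ (q - 1) * (-1)) t :=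
      (Real.hasDerivAt_rpow_const (x := -t) (p := q) (Or.inl (by linarith))).comp t (hasDerivAt_neg' t)
    have h2 : HasDerivAt (fun s : ℝ => |s| ^ q) (q * (-t) ^ (q - 1) * (-1)) t := by
      apply h1.congr_of_eventuallyEq
      filter_upwards [Iio_mem_nhds ht] with s hs
      rw [abs_of_neg hs]
    have h3 : q * (-t) ^ (q - 1) * (-1) = q * |t| ^ (q - 2) * t := by
      rw [abs_of_neg ht, rpow_sub_one_eq (by linarith : (0:ℝ) < -t)]; ring
    rw [← h3]; exact h2
  · have key : Tendsto (fun s : ℝ => |s| ^ (q - 1)) (𝓝 0) (𝓝 0) := by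
      have hc : ContinuousAt (fun u : ℝ => u ^ (q - 1)) 0 :=
        Real.continuousAt_rpow_const 0 (q - 1) (Or.inr (by linarith))
      have h0 : (0:ℝ) ^ (q-1) = 0 := Real.zero_rpow (by linarith)
      have := hc.tendsto
      rw [h0] at this
      exact this.comp (continuous_abs.tendsto' 0 0 (abs_zero))
    rw [show q * |(0:ℝ)| ^ (q - 2) * 0 = 0 by ring]
    rw [hasDerivAt_iff_tendsto_slope]
    rw [tendsto_zero_iff_abs_tendsto_zero]
    apply (key.mono_left nhdsWithin_le_nhds).congr'
    filter_upwards [self_mem_nhdsWithin] with s hs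
    have hs0 : s ≠ 0 := hs
    simp only [Function.comp_apply]
    rw [slope_def_field]
    have h0 : |(0:ℝ)| ^ q = 0 := by rw [abs_zero]; exact Real.zero_rpow (by linarith)
    rw [h0]
    rw [show (|s| ^ q - 0) / (s - 0) = |s| ^ q / s by ring_nf]
    rw [abs_div, Real.abs_rpow_of_nonneg (abs_nonneg s), abs_abs]
    rw [show |s| ^ q / |s| = |s| ^ q / |s| ^ (1:ℝ) by rw [Real.rpow_one]]
    rw [← Real.rpow_sub (abs_pos.mpr hs0)]
  · have h1 : HasDerivAt (fun s : ℝ => s ^ q) (q * t ^ (q - 1)) t :=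
      Real.hasDerivAt_rpow_const (Or.inl (ne_of_gt ht))
    have h2 : HasDerivAt (fun s : ℝ => |s| ^ q) (q * t ^ (q - 1)) t := by
      apply h1.congr_of_eventuallyEq
      filter_upwards [Ioi_mem_nhds ht] with s hs
      rw [abs_of_pos hs]
    have h3 : q * t ^ (q - 1) = q * |t| ^ (q - 2) * t := by
      rw [abs_of_pos ht, rpow_sub_one_eq ht]; ring
    rw [← h3]; exact h2

-- minimal replica of context for experimentation
lemma sum_abs_rpow_nonneg {n : ℕ} (q : ℝ) (v : Fin n → ℝ) : 0 ≤ ∑ j, |v j| ^ q :=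
  Finset.sum_nonneg fun j _ => Real.rpow_nonneg (abs_nonneg _) q

lemma sum_eq_one_of_pnorm_one {n : ℕ} {q : ℝ} (hq : 0 < q) {v : Fin n → ℝ}
    (h : pnorm q v = 1) : ∑ j, |v j| ^ q = 1 := by
  have h1 : ((∑ j, |v j| ^ q) ^ (1/q)) ^ q = 1 := by
    rw [pnorm] at h; rw [h, Real.one_rpow]
  rwa [← Real.rpow_mul (sum_abs_rpow_nonneg q v), one_div_mul_cancel (ne_of_gt hq),
    Real.rpow_one] at h1

lemma pnorm_nonneg {n : ℕ} (q : ℝ) (v : Fin n → ℝ) : 0 ≤ pnorm q v :=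
  Real.rpow_nonneg (sum_abs_rpow_nonneg q v) _

lemma pnorm_pos {n : ℕ} {q : ℝ} (hq : 0 < q) {v : Fin n → ℝ} (hv : v ≠ 0) :
    0 < pnorm q v := by
  obtain ⟨j, hj⟩ := Function.ne_iff.mp hv
  have hS : 0 < ∑ j, |v j| ^ q := by
    apply Finset.sum_pos' (fun j _ => Real.rpow_nonneg (abs_nonneg _) q)
    exact ⟨j, Finset.mem_univ j, Real.rpow_pos_of_pos (abs_pos.mpr hj) q⟩
  exact Real.rpow_pos_of_pos hS _

lemma ne_zero_of_pnorm_one {n : ℕ} {q : ℝ} (hq : 0 < q) {v : Fin n → ℝ}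
    (h : pnorm q v = 1) : v ≠ 0 := by
  intro hv
  rw [hv] at h
  simp only [pnorm, Pi.zero_apply, abs_zero] at h
  rw [Real.zero_rpow (ne_of_gt hq)] at h
  simp only [Finset.sum_const, smul_zero] at h
  rw [Real.zero_rpow (by positivity)] at h
  exact one_ne_zero h.symm

lemma pnorm_smul {n : ℕ} {q : ℝ} (hq : 0 < q) (c : ℝ) (v : Fin n → ℝ) :
    pnorm q (c • v) = |c| * pnorm q v := by
  unfold pnorm
  have h1 : ∀ j, |(c • v) j| ^ q = |c| ^ q * |v j| ^ q := by
    intro j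
    simp only [Pi.smul_apply, smul_eq_mul, abs_mul]
    rw [Real.mul_rpow (abs_nonneg _) (abs_nonneg _)]
  simp only [h1, ← Finset.mul_sum]
  rw [Real.mul_rpow (by positivity) (sum_abs_rpow_nonneg q v),
    ← Real.rpow_mul (abs_nonneg c), mul_one_div_cancel (ne_of_gt hq), Real.rpow_one]

lemma euler {m : ℕ} {N : Fin m → ℕ} (T : (∀ k, Fin (N k)) → ℝ) (k : Fin m)
    (z : ∀ l, Fin (N l) → ℝ) :
    ∑ t : Fin (N k), z k t * tmap T k t z = mform T z := by
  simp only [tmap, Finset.mul_sum, mul_ite, mul_zero]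
  rw [Finset.sum_comm]
  unfold mform
  refine Finset.sum_congr rfl fun J _ => ?_
  rw [Finset.sum_ite_eq Finset.univ (J k)]
  simp only [Finset.mem_univ, if_true]
  rw [← Finset.mul_prod_erase Finset.univ _ (Finset.mem_univ k)]
  ring

namespace ShapePartition
variable {m d : ℕ} {N : Fin m → ℕ}

/-- coordinate continuous linear functional -/
noncomputable def pCLM (σ : ShapePartition m d N) (i : Fin d) (j : Fin (σ.n i)) :
    ((∀ i, Fin (σ.n i) → ℝ) →L[ℝ] ℝ) :=
  (ContinuousLinearMap.proj j).comp (ContinuousLinearMap.proj (R := ℝ) (φ := fun i => Fin (σ.n i) → ℝ) i)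

@[simp] lemma pCLM_apply (σ : ShapePartition m d N) (i : Fin d) (j : Fin (σ.n i))
    (v : ∀ i, Fin (σ.n i) → ℝ) : σ.pCLM i j v = v i j := rfl

theorem hasFDerivAt_num (σ : ShapePartition m d N) (T : (∀ k, Fin (N k)) → ℝ)
    (x : ∀ i, Fin (σ.n i) → ℝ) :
    HasFDerivAt (fun y => mform T (σ.blowup y))
      (∑ k : Fin m, ∑ t : Fin (N k),
        tmap T k t (σ.blowup x) • σ.pCLM (σ.β k) (Fin.cast (σ.dim_n k) t)) x := by
  have h1 : ∀ J : ∀ k, Fin (N k),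
      HasFDerivAt (fun y => ∏ k, σ.blowup y k (J k))
        (∑ k, (∏ l ∈ Finset.univ.erase k, σ.blowup x l (J l)) •
          σ.pCLM (σ.β k) (Fin.cast (σ.dim_n k) (J k))) x := by
    intro J
    exact HasFDerivAt.finset_prod (fun k _ =>
      (σ.pCLM (σ.β k) (Fin.cast (σ.dim_n k) (J k))).hasFDerivAt)
  have h2 : HasFDerivAt (fun y => mform T (σ.blowup y))
      (∑ J : ∀ k, Fin (N k), T J • ∑ k, (∏ l ∈ Finset.univ.erase k, σ.blowup x l (J l)) •
          σ.pCLM (σ.β k) (Fin.cast (σ.dim_n k) (J k))) x :=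
    HasFDerivAt.fun_sum (fun J _ => (h1 J).const_mul (T J))
  refine h2.congr_fderiv (ContinuousLinearMap.ext fun v => ?_)
  simp only [ContinuousLinearMap.coe_sum', Finset.sum_apply, ContinuousLinearMap.coe_smul',
    Pi.smul_apply, pCLM_apply, smul_eq_mul]
  simp only [Finset.mul_sum]
  rw [Finset.sum_comm]
  refine Finset.sum_congr rfl fun k _ => ?_
  simp only [tmap, Finset.sum_mul, ite_mul, zero_mul]
  rw [Finset.sum_comm]
  refine Finset.sum_congr rfl fun J _ => ?_
  rw [Finset.sum_ite_eq (Finset.univ) (J k)]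
  simp [mul_assoc]

lemma apply_congr (σ : ShapePartition m d N) (x : ∀ i, Fin (σ.n i) → ℝ) {i i' : Fin d}
    (h : i = i') {a : Fin (σ.n i)} {b : Fin (σ.n i')} (hv : (a : ℕ) = (b : ℕ)) :
    x i a = x i' b := by
  subst h; congr 1; exact Fin.ext hv

lemma blowup_congr (σ : ShapePartition m d N) (x : ∀ i, Fin (σ.n i) → ℝ) {l l' : Fin m}
    (h : σ.β l = σ.β l') {a : Fin (N l)} {b : Fin (N l')} (hv : (a : ℕ) = (b : ℕ)) :
    σ.blowup x l a = σ.blowup x l' b :=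
  σ.apply_congr x h (by simpa using hv)

theorem tmap_symm (σ : ShapePartition m d N) (T : (∀ k, Fin (N k)) → ℝ)
    (hsym : σ.PartSymmetric T) (x : ∀ i, Fin (σ.n i) → ℝ) (k : Fin m) (t : Fin (N k)) :
    tmap T k t (σ.blowup x) = tmap T (σ.rep (σ.β k)) (Fin.cast (σ.dim_n k) t) (σ.blowup x) := by
  set k' := σ.rep (σ.β k) with hk'
  have hβ : σ.β k' = σ.β k := σ.rep_mem _
  set pe := Equiv.swap k k' with hpedef
  have hpe : ∀ l, σ.β (pe l) = σ.β l := by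
    intro l
    rcases eq_or_ne l k with rfl | h1
    · rw [hpedef]; rw [Equiv.swap_apply_left]; exact hβ
    rcases eq_or_ne l k' with rfl | h2
    · rw [hpedef]; rw [Equiv.swap_apply_right]; exact hβ.symm
    · rw [hpedef, Equiv.swap_apply_of_ne_of_ne h1 h2]
  have hpepe : ∀ l, pe (pe l) = l := fun l => Equiv.swap_apply_self k k' l
  set Φ : (∀ l, Fin (N l)) → (∀ l, Fin (N l)) :=
    fun J l => Fin.cast (σ.dim_eq (pe l) l (hpe l)) (J (pe l)) with hΦ
  have hinv : ∀ J, Φ (Φ J) = J := by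
    intro J; funext l; apply Fin.ext
    simp only [hΦ, Fin.coe_cast]
    exact congrArg (fun w => ((J w : ℕ))) (hpepe l)
  set e : (∀ l, Fin (N l)) ≃ (∀ l, Fin (N l)) := ⟨Φ, Φ, hinv, hinv⟩ with he
  rw [tmap, tmap]
  apply Fintype.sum_equiv e
  intro J
  have hcond : ((e J) k' = Fin.cast (σ.dim_n k) t) ↔ (J k = t) := by
    refine Fin.ext_iff.trans (Iff.trans ?_ Fin.ext_iff.symm)
    simp only [he, hΦ, Equiv.coe_fn_mk, Fin.coe_cast]
    have : (J (pe k') : ℕ) = (J k : ℕ) :=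
      congrArg (fun w => ((J w : ℕ))) (by rw [hpedef, Equiv.swap_apply_right])
    rw [this]
  have hT : T (e J) = T J := hsym pe hpe J
  have hprod : (∏ l ∈ Finset.univ.erase k', σ.blowup x l ((e J) l))
      = ∏ l ∈ Finset.univ.erase k, σ.blowup x l (J l) := by
    apply Finset.prod_bij' (fun l _ => pe l) (fun l _ => pe l)
    · intro l hl
      simp only [Finset.mem_erase, Finset.mem_univ, and_true] at hl ⊢
      intro hc
      exact hl (by rw [← hpepe l, hc, hpedef, Equiv.swap_apply_left])
    · intro l hl
      simp only [Finset.mem_erase, Finset.mem_univ, and_true] at hl ⊢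
      intro hc
      exact hl (by rw [← hpepe l, hc, hpedef, Equiv.swap_apply_right])
    · intro l _; exact hpepe l
    · intro l _; exact hpepe l
    · intro l _
      exact σ.blowup_congr x (hpe l).symm (by simp [he, hΦ])
  rcases eq_or_ne (J k) t with hc | hc
  · exact (if_pos hc).trans ((congrArg₂ (· * ·) hT.symm hprod.symm).trans (if_pos (hcond.mpr hc)).symm)
  · exact (if_neg hc).trans (if_neg (fun hcc => hc (hcond.mp hcc))).symm

theorem hasFDerivAt_den (σ : ShapePartition m d N) (p : Fin d → ℝ) (hp : ∀ i, 1 < p i)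
    (x : ∀ i, Fin (σ.n i) → ℝ) (hx : ∀ i, (∑ j, |x i j| ^ p i) = 1) :
    HasFDerivAt (fun y : ∀ i, Fin (σ.n i) → ℝ => ∏ i, pnorm (p i) (y i) ^ (σ.ν i))
      (∑ i, ∑ j, ((σ.ν i : ℝ) * psi (p i) (x i) j) • σ.pCLM i j) x := by
  have hp0 : ∀ i, p i ≠ 0 := fun i => by have := hp i; positivity
  have hfun : (fun y : ∀ i, Fin (σ.n i) → ℝ => ∏ i, pnorm (p i) (y i) ^ (σ.ν i))
      = fun y => ∏ i, (∑ j, |y i j| ^ p i) ^ ((σ.ν i : ℝ) / p i) := by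
    funext y
    refine Finset.prod_congr rfl fun i _ => ?_
    rw [pnorm, ← Real.rpow_natCast ((∑ j, |y i j| ^ p i) ^ (1 / p i)) (σ.ν i),
      ← Real.rpow_mul (sum_abs_rpow_nonneg _ _)]
    congr 1
    field_simp
  rw [hfun]
  have hS : ∀ i, HasFDerivAt (fun y : ∀ i, Fin (σ.n i) → ℝ => ∑ j, |y i j| ^ p i)
      (∑ j, (p i * |x i j| ^ (p i - 2) * x i j) • σ.pCLM i j) x := by
    intro i
    exact HasFDerivAt.fun_sum fun j _ => by
      have h := (aux_hasDerivAt_abs_rpow (hp i) (x i j)).comp_hasFDerivAt x (σ.pCLM i j).hasFDerivAt; exact h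
  have hF : ∀ i, HasFDerivAt
      (fun y : ∀ i, Fin (σ.n i) → ℝ => (∑ j, |y i j| ^ p i) ^ ((σ.ν i : ℝ) / p i))
      ((((σ.ν i : ℝ) / p i) * (∑ j, |x i j| ^ p i) ^ ((σ.ν i : ℝ) / p i - 1)) •
        ∑ j, (p i * |x i j| ^ (p i - 2) * x i j) • σ.pCLM i j) x := by
    intro i
    exact (Real.hasDerivAt_rpow_const (p := (σ.ν i : ℝ) / p i)
      (Or.inl (by rw [hx i]; norm_num))).comp_hasFDerivAt x (hS i)
  have hprod := HasFDerivAt.finset_prod (u := Finset.univ) (fun i _ => hF i)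
  refine hprod.congr_fderiv (ContinuousLinearMap.ext fun v => ?_)
  simp only [ContinuousLinearMap.coe_sum', Finset.sum_apply, ContinuousLinearMap.coe_smul',
    Pi.smul_apply, pCLM_apply, smul_eq_mul, hx, Real.one_rpow]
  refine Finset.sum_congr rfl fun i _ => ?_
  rw [Finset.prod_const_one, one_mul, Finset.mul_sum]
  refine Finset.sum_congr rfl fun j _ => ?_
  rw [psi]
  have hc : (σ.ν i : ℝ) / p i * p i = (σ.ν i : ℝ) := div_mul_cancel₀ _ (hp0 i)
  linear_combination (|x i j| ^ (p i - 2) * x i j * v i j) * hc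

lemma nu_pos (σ : ShapePartition m d N) (i : Fin d) : 0 < σ.ν i :=
  Finset.card_pos.mpr ⟨σ.rep i, by simp [σ.rep_mem i]⟩

theorem rayleigh_hasFDerivAt (σ : ShapePartition m d N) (T : (∀ k, Fin (N k)) → ℝ)
    (hsym : σ.PartSymmetric T) (p : Fin d → ℝ) (hp : ∀ i, 1 < p i)
    (x : ∀ i, Fin (σ.n i) → ℝ) (hx : ∀ i, pnorm (p i) (x i) = 1) :
    HasFDerivAt (σ.rayleigh T p)
      (∑ i, ∑ j : Fin (σ.n i), ((σ.ν i : ℝ) * (tmap T (σ.rep i) j (σ.blowup x)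
          - mform T (σ.blowup x) * psi (p i) (x i) j)) • σ.pCLM i j) x := by
  have hS : ∀ i, (∑ j, |x i j| ^ p i) = 1 := fun i =>
    sum_eq_one_of_pnorm_one (lt_trans one_pos (hp i)) (hx i)
  have hden1 : (∏ i, pnorm (p i) (x i) ^ (σ.ν i)) = 1 := by
    simp [hx]
  have hnum := σ.hasFDerivAt_num T x
  have hden := σ.hasFDerivAt_den p hp x hS
  have hfun : σ.rayleigh T p = fun y => (mform T (σ.blowup y)) *
      (∏ i, pnorm (p i) (y i) ^ (σ.ν i))⁻¹ := funext fun y => div_eq_mul_inv _ _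
  rw [hfun]
  have hinv : HasFDerivAt (fun y : ∀ i, Fin (σ.n i) → ℝ =>
      (∏ i, pnorm (p i) (y i) ^ σ.ν i)⁻¹)
      ((-((∏ i, pnorm (p i) (x i) ^ σ.ν i) ^ 2)⁻¹) •
        ∑ i, ∑ j, ((σ.ν i : ℝ) * psi (p i) (x i) j) • σ.pCLM i j) x :=
    (hasDerivAt_inv (by rw [hden1]; norm_num)).comp_hasFDerivAt x hden
  have hmul := hnum.mul hinv
  refine hmul.congr_fderiv (ContinuousLinearMap.ext fun v => ?_)
  simp only [hden1, one_pow, inv_one, one_smul, ContinuousLinearMap.coe_add',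
    ContinuousLinearMap.coe_smul', Pi.add_apply, Pi.smul_apply,
    ContinuousLinearMap.coe_sum', Finset.sum_apply, pCLM_apply, smul_eq_mul, neg_smul,
    ContinuousLinearMap.coe_neg', Pi.neg_apply]
  -- reindex the numerator derivative
  have hlnum : ∀ k : Fin m,
      (∑ t : Fin (N k), tmap T k t (σ.blowup x) * v (σ.β k) (Fin.cast (σ.dim_n k) t))
      = ∑ j : Fin (σ.n (σ.β k)), tmap T (σ.rep (σ.β k)) j (σ.blowup x) * v (σ.β k) j := by
    intro k
    refine Fintype.sum_equiv (finCongr (σ.dim_n k)) _ _ fun t => ?_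
    rw [σ.tmap_symm T hsym x k t]
    rfl
  simp only [hlnum]
  rw [Finset.sum_comp (fun i => ∑ j : Fin (σ.n i), tmap T (σ.rep i) j (σ.blowup x) * v i j) σ.β]
  rw [Finset.image_univ_of_surjective σ.surj]
  simp only [nsmul_eq_mul, ShapePartition.ν]
  have hthis : ∀ i : Fin d, ∑ j : Fin (σ.n i), (((Finset.univ.filter (fun k => σ.β k = i)).card : ℝ) *
        (tmap T (σ.rep i) j (σ.blowup x) - mform T (σ.blowup x) * psi (p i) (x i) j)) * v i j
      = ((Finset.univ.filter (fun a => σ.β a = i)).card : ℝ) *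
          (∑ j : Fin (σ.n i), tmap T (σ.rep i) j (σ.blowup x) * v i j)
        - mform T (σ.blowup x) *
          ∑ j : Fin (σ.n i), ((Finset.univ.filter (fun k => σ.β k = i)).card : ℝ) * psi (p i) (x i) j * v i j := by
    intro i
    rw [Finset.mul_sum, Finset.mul_sum, ← Finset.sum_sub_distrib]
    exact Finset.sum_congr rfl fun j _ => by ring
  rw [Finset.sum_congr rfl (fun i _ => hthis i), Finset.sum_sub_distrib, ← Finset.mul_sum]
  ring

lemma mform_eq_lam (hm : 0 < m) (σ : ShapePartition m d N) (T : (∀ k, Fin (N k)) → ℝ)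
    (p : Fin d → ℝ) (hp : ∀ i, 1 < p i) {lam : ℝ} {x : ∀ i, Fin (σ.n i) → ℝ}
    (heig : σ.IsEigenpair T p lam x) : mform T (σ.blowup x) = lam := by
  set i0 : Fin d := σ.β ⟨0, hm⟩ with hi0
  have hb : ∀ t : Fin (N (σ.rep i0)), σ.blowup x (σ.rep i0) t = x i0 t := fun t =>
    σ.apply_congr x (σ.rep_mem i0) (by simp)
  rw [← euler T (σ.rep i0) (σ.blowup x)]
  have hterm : ∀ t : Fin (N (σ.rep i0)),
      σ.blowup x (σ.rep i0) t * tmap T (σ.rep i0) t (σ.blowup x)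
      = lam * |x i0 t| ^ p i0 := by
    intro t
    rw [hb t, heig.2 i0 t]; simp only [psi]
    rcases eq_or_ne (x i0 t) 0 with h0 | h0
    · rw [h0, abs_zero]
      conv_rhs => rw [Real.zero_rpow (ne_of_gt (lt_trans one_pos (hp i0)))]
      ring
    · have habs : 0 < |x i0 t| := abs_pos.mpr h0
      have hsq : x i0 t * x i0 t = |x i0 t| ^ (2:ℝ) := by
        rw [show (2:ℝ) = ((2:ℕ):ℝ) by norm_num, Real.rpow_natCast, sq_abs, sq]
      have : |x i0 t| ^ (p i0 - 2) * (x i0 t * x i0 t) = |x i0 t| ^ p i0 := by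
        rw [hsq, ← Real.rpow_add habs]
        ring_nf
      linear_combination lam * this
  rw [Finset.sum_congr rfl fun t _ => hterm t, ← Finset.mul_sum]
  have hsum : (∑ t : Fin (N (σ.rep i0)), |x i0 t| ^ p i0) = 1 :=
    sum_eq_one_of_pnorm_one (lt_trans one_pos (hp i0)) (heig.1 i0)
  rw [hsum, mul_one]

lemma den_eq_one (σ : ShapePartition m d N) (p : Fin d → ℝ) {x : ∀ i, Fin (σ.n i) → ℝ}
    (hx : ∀ i, pnorm (p i) (x i) = 1) :
    (∏ i, pnorm (p i) (x i) ^ (σ.ν i)) = 1 := by simp [hx]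

lemma rayleigh_eq_of_unit (σ : ShapePartition m d N) (T : (∀ k, Fin (N k)) → ℝ)
    (p : Fin d → ℝ) {x : ∀ i, Fin (σ.n i) → ℝ} (hx : ∀ i, pnorm (p i) (x i) = 1) :
    σ.rayleigh T p x = mform T (σ.blowup x) := by
  rw [rayleigh, σ.den_eq_one p hx, div_one]

theorem eigen_crit (hm : 0 < m) (σ : ShapePartition m d N) (T : (∀ k, Fin (N k)) → ℝ)
    (hsym : σ.PartSymmetric T) (p : Fin d → ℝ) (hp : ∀ i, 1 < p i)
    {lam : ℝ} {x : ∀ i, Fin (σ.n i) → ℝ} (heig : σ.IsEigenpair T p lam x) :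
    fderiv ℝ (σ.rayleigh T p) x = 0 ∧ σ.rayleigh T p x = lam := by
  have hmf := mform_eq_lam hm σ T p hp heig
  have hval : σ.rayleigh T p x = lam := by rw [σ.rayleigh_eq_of_unit T p heig.1, hmf]
  refine ⟨?_, hval⟩
  have hder := σ.rayleigh_hasFDerivAt T hsym p hp x heig.1
  have hL0 : (∑ i, ∑ j : Fin (σ.n i), ((σ.ν i : ℝ) * (tmap T (σ.rep i) j (σ.blowup x)
      - mform T (σ.blowup x) * psi (p i) (x i) j)) • σ.pCLM i j) = 0 := by
    refine Finset.sum_eq_zero fun i _ => Finset.sum_eq_zero fun j _ => ?_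
    rw [heig.2 i j, hmf, show lam * psi (p i) (x i) j - lam * psi (p i) (x i) j = 0 by ring,
      mul_zero, zero_smul]
  rw [hL0] at hder
  exact hder.fderiv

lemma pnorm_single {n : ℕ} {q : ℝ} (hq : 0 < q) (j0 : Fin n) :
    pnorm q (Pi.single j0 (1:ℝ)) = 1 := by
  unfold pnorm
  have h1 : ∀ j, |(Pi.single j0 (1:ℝ) : Fin n → ℝ) j| ^ q = if j = j0 then (1:ℝ) else 0 := by
    intro j
    rcases eq_or_ne j j0 with rfl | hj
    · rw [Pi.single_eq_same, abs_one, Real.one_rpow, if_pos rfl]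
    · rw [Pi.single_eq_of_ne hj, abs_zero, Real.zero_rpow (ne_of_gt hq), if_neg hj]
  simp only [h1]
  rw [Finset.sum_ite_eq' Finset.univ j0]
  simp

lemma continuous_g (σ : ShapePartition m d N) (T : (∀ k, Fin (N k)) → ℝ) :
    Continuous (fun y : ∀ i, Fin (σ.n i) → ℝ => mform T (σ.blowup y)) := by
  unfold mform
  apply continuous_finset_sum
  intro J _
  apply Continuous.mul continuous_const
  apply continuous_finset_prod
  intro k _
  exact (σ.pCLM (σ.β k) (Fin.cast (σ.dim_n k) (J k))).continuous

lemma continuous_pnorm_comp (σ : ShapePartition m d N) (p : Fin d → ℝ) (hp : ∀ i, 1 < p i)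
    (i : Fin d) : Continuous (fun y : ∀ i, Fin (σ.n i) → ℝ => pnorm (p i) (y i)) := by
  have hq : (0:ℝ) < p i := lt_trans one_pos (hp i)
  have h1 : Continuous fun y : ∀ i, Fin (σ.n i) → ℝ => ∑ j, |y i j| ^ p i := by
    apply continuous_finset_sum
    intro j _
    exact (Real.continuous_rpow_const (le_of_lt hq)).comp
      (continuous_abs.comp (σ.pCLM i j).continuous)
  exact (Real.continuous_rpow_const (by positivity)).comp h1

lemma mform_blowup_smul (σ : ShapePartition m d N) (T : (∀ k, Fin (N k)) → ℝ)
    (c : Fin d → ℝ) (x : ∀ i, Fin (σ.n i) → ℝ) :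
    mform T (σ.blowup (fun i => c i • x i)) = (∏ i, c i ^ (σ.ν i)) * mform T (σ.blowup x) := by
  unfold mform
  rw [Finset.mul_sum]
  refine Finset.sum_congr rfl fun J _ => ?_
  have hb : ∀ k, σ.blowup (fun i => c i • x i) k (J k) = c (σ.β k) * σ.blowup x k (J k) :=
    fun k => rfl
  simp only [hb]
  rw [Finset.prod_mul_distrib]
  rw [Finset.prod_comp c σ.β, Finset.image_univ_of_surjective σ.surj]
  simp only [ShapePartition.ν]
  ring

lemma rayleigh_normalize (σ : ShapePartition m d N) (T : (∀ k, Fin (N k)) → ℝ)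
    (p : Fin d → ℝ) (hp : ∀ i, 1 < p i) (x : ∀ i, Fin (σ.n i) → ℝ) (hx : ∀ i, x i ≠ 0) :
    (∀ i, pnorm (p i) ((fun i => (pnorm (p i) (x i))⁻¹ • x i) i) = 1) ∧
    mform T (σ.blowup (fun i => (pnorm (p i) (x i))⁻¹ • x i)) = σ.rayleigh T p x := by
  have hq : ∀ i, (0:ℝ) < p i := fun i => lt_trans one_pos (hp i)
  have hpos : ∀ i, 0 < pnorm (p i) (x i) := fun i => pnorm_pos (hq i) (hx i)
  constructor
  · intro i
    rw [pnorm_smul (hq i), abs_of_pos (inv_pos.mpr (hpos i)), inv_mul_cancel₀ (ne_of_gt (hpos i))]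
  · rw [σ.mform_blowup_smul T _ x, rayleigh, div_eq_inv_mul]
    congr 1
    rw [← Finset.prod_inv_distrib]
    exact Finset.prod_congr rfl fun i _ => inv_pow _ _


lemma eval_single (σ : ShapePartition m d N) (c : ∀ i, Fin (σ.n i) → ℝ) (i : Fin d)
    (j : Fin (σ.n i)) :
    (∑ i', ∑ j', c i' j' • σ.pCLM i' j') (Pi.single i (Pi.single j (1:ℝ))) = c i j := by
  simp only [ContinuousLinearMap.sum_apply, ContinuousLinearMap.smul_apply, pCLM_apply,
    smul_eq_mul]
  rw [Finset.sum_eq_single i]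
  · rw [Finset.sum_eq_single j]
    · rw [Pi.single_eq_same, Pi.single_eq_same, mul_one]
    · intro j' _ hj'; rw [Pi.single_eq_same, Pi.single_eq_of_ne hj', mul_zero]
    · intro h; exact absurd (Finset.mem_univ j) h
  · intro i' _ hi'
    refine Finset.sum_eq_zero fun j' _ => ?_
    rw [Pi.single_eq_of_ne hi']
    simp
  · intro h; exact absurd (Finset.mem_univ i) h

theorem tnorm_eq_specRad (hm : 0 < m) (hN : ∀ k, 0 < N k)
    (T : (∀ k, Fin (N k)) → ℝ) (σ : ShapePartition m d N) (p : Fin d → ℝ)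
    (hp : ∀ i, 1 < p i) (hsym : σ.PartSymmetric T) :
    σ.tnorm T p = σ.specRad T p := by
  classical
  have hq : ∀ i, (0:ℝ) < p i := fun i => lt_trans one_pos (hp i)
  set K : Set (∀ i, Fin (σ.n i) → ℝ) := {x | ∀ i, pnorm (p i) (x i) = 1} with hKdef
  have hKclosed : IsClosed K := by
    have hKi : K = ⋂ i, {x : ∀ i, Fin (σ.n i) → ℝ | pnorm (p i) (x i) = 1} := by
      ext y; simp [hKdef, Set.mem_iInter]
    rw [hKi]
    exact isClosed_iInter fun i => isClosed_eq (σ.continuous_pnorm_comp p hp i) continuous_const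
  have hKsub : K ⊆ Metric.closedBall 0 1 := by
    intro x hx
    rw [Metric.mem_closedBall, dist_zero_right]
    rw [pi_norm_le_iff_of_nonneg zero_le_one]
    intro i
    rw [pi_norm_le_iff_of_nonneg zero_le_one]
    intro j
    rw [Real.norm_eq_abs]
    by_contra hcon
    push_neg at hcon
    have h1 : (1:ℝ) < |x i j| ^ p i :=
      (Real.one_lt_rpow_iff_of_pos (lt_trans one_pos hcon)).mpr (Or.inl ⟨hcon, hq i⟩)
    have h2 : |x i j| ^ p i ≤ ∑ j', |x i j'| ^ p i :=
      Finset.single_le_sum (fun j' _ => Real.rpow_nonneg (abs_nonneg _) _) (Finset.mem_univ j)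
    have h3 := sum_eq_one_of_pnorm_one (hq i) (hx i)
    linarith
  have hKcpt : IsCompact K :=
    (isCompact_closedBall (0 : ∀ i, Fin (σ.n i) → ℝ) 1).of_isClosed_subset hKclosed hKsub
  have hKne : K.Nonempty :=
    ⟨fun i => Pi.single (⟨0, hN (σ.rep i)⟩ : Fin (σ.n i)) 1, fun i => pnorm_single (hq i) _⟩
  have hcont : Continuous fun y => |mform T (σ.blowup y)| :=
    continuous_abs.comp (σ.continuous_g T)
  obtain ⟨xs, hxsK, hmax⟩ := hKcpt.exists_isMaxOn hKne hcont.continuousOn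
  have hxsK' : ∀ i, pnorm (p i) (xs i) = 1 := hxsK
  set A : Set ℝ := {r : ℝ | ∃ x : ∀ i, Fin (σ.n i) → ℝ,
    (∀ i, x i ≠ 0) ∧ r = |σ.rayleigh T p x|} with hAdef
  have hAeq : A = (fun y => |mform T (σ.blowup y)|) '' K := by
    ext r; constructor
    · rintro ⟨x, hxnz, rfl⟩
      obtain ⟨h1, h2⟩ := σ.rayleigh_normalize T p hp x hxnz
      exact ⟨_, h1, by dsimp only; rw [h2]⟩
    · rintro ⟨y, hyK, rfl⟩
      refine ⟨y, fun i => ne_zero_of_pnorm_one (hq i) (hyK i), ?_⟩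
      rw [σ.rayleigh_eq_of_unit T p hyK]
  have hgreat : IsGreatest A (|mform T (σ.blowup xs)|) := by
    constructor
    · rw [hAeq]; exact ⟨xs, hxsK, rfl⟩
    · intro r hr
      rw [hAeq] at hr
      obtain ⟨y, hyK, rfl⟩ := hr
      exact hmax hyK
  set U : Set (∀ i, Fin (σ.n i) → ℝ) := {x | ∀ i, x i ≠ 0} with hUdef
  have hUopen : IsOpen U := by
    have hUi : U = ⋂ i, (fun x : ∀ i, Fin (σ.n i) → ℝ => x i) ⁻¹' {0}ᶜ := by
      ext y; simp [hUdef, Set.mem_iInter]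
    rw [hUi]
    exact isOpen_iInter_of_finite fun i =>
      (isClosed_singleton.isOpen_compl).preimage (continuous_apply i)
  have hxsU : xs ∈ U := fun i => ne_zero_of_pnorm_one (hq i) (hxsK' i)
  have hbound : ∀ y ∈ U, |σ.rayleigh T p y| ≤ |mform T (σ.blowup xs)| := by
    intro y hy
    exact hgreat.2 ⟨y, hy, rfl⟩
  have hraylxs : σ.rayleigh T p xs = mform T (σ.blowup xs) :=
    σ.rayleigh_eq_of_unit T p hxsK'
  have hcrit : fderiv ℝ (σ.rayleigh T p) xs = 0 := by
    rcases le_or_gt 0 (mform T (σ.blowup xs)) with hsgn | hsgn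
    · have hmax' : IsMaxOn (σ.rayleigh T p) U xs := by
        intro y hy
        calc σ.rayleigh T p y ≤ |σ.rayleigh T p y| := le_abs_self _
        _ ≤ |mform T (σ.blowup xs)| := hbound y hy
        _ = mform T (σ.blowup xs) := abs_of_nonneg hsgn
        _ = σ.rayleigh T p xs := hraylxs.symm
      exact (hmax'.isLocalMax (hUopen.mem_nhds hxsU)).fderiv_eq_zero
    · have hmin' : IsMinOn (σ.rayleigh T p) U xs := by
        intro y hy
        calc σ.rayleigh T p xs = mform T (σ.blowup xs) := hraylxs
        _ = -|mform T (σ.blowup xs)| := by rw [abs_of_neg hsgn]; ring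
        _ ≤ -|σ.rayleigh T p y| := neg_le_neg (hbound y hy)
        _ ≤ σ.rayleigh T p y := neg_abs_le _
      exact (hmin'.isLocalMin (hUopen.mem_nhds hxsU)).fderiv_eq_zero
  have hder := σ.rayleigh_hasFDerivAt T hsym p hp xs hxsK'
  have hL0 := hder.fderiv.symm.trans hcrit
  have heig : σ.IsEigenpair T p (mform T (σ.blowup xs)) xs := by
    refine ⟨hxsK', fun i j => ?_⟩
    have happ : (∑ i', ∑ j' : Fin (σ.n i'), ((σ.ν i' : ℝ) * (tmap T (σ.rep i') j' (σ.blowup xs)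
        - mform T (σ.blowup xs) * psi (p i') (xs i') j')) • σ.pCLM i' j')
        (Pi.single i (Pi.single j (1:ℝ))) = 0 := by rw [hL0]; rfl
    rw [σ.eval_single _ i j] at happ
    have hν : (0:ℝ) < (σ.ν i : ℝ) := Nat.cast_pos.mpr (σ.nu_pos i)
    have h2 := (mul_eq_zero.mp happ).resolve_left (ne_of_gt hν)
    linarith [h2]
  set B : Set ℝ := {r : ℝ | ∃ lam x, σ.IsEigenpair T p lam x ∧ r = |lam|} with hBdef
  have hBsubA : B ⊆ A := by
    rintro r ⟨lam, x, heig', rfl⟩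
    refine ⟨x, fun i => ne_zero_of_pnorm_one (hq i) (heig'.1 i), ?_⟩
    rw [(eigen_crit hm σ T hsym p hp heig').2]
  have hmemB : |mform T (σ.blowup xs)| ∈ B := ⟨_, xs, heig, rfl⟩
  have hAbdd : BddAbove A := ⟨_, hgreat.2⟩
  have htn : σ.tnorm T p = |mform T (σ.blowup xs)| := by
    unfold tnorm; rw [← hAdef]; exact hgreat.csSup_eq
  have hsr : σ.specRad T p = sSup B := by unfold specRad; rw [← hBdef]
  rw [htn, hsr]
  refine le_antisymm (le_csSup (hAbdd.mono hBsubA) hmemB) ?_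
  have h5 : sSup B ≤ sSup A := csSup_le_csSup hAbdd ⟨_, hmemB⟩ hBsubA
  have h6 : sSup A = |mform T (σ.blowup xs)| := hgreat.csSup_eq
  rw [h6] at h5; exact h5
end ShapePartition


end PFProofs

/-- If `T` is σ-symmetric, then every `(σ,p)`-eigenvector of `T` is a
critical point of the Rayleigh quotient `Φ`, with critical value the corresponding
eigenvalue; moreover `‖T‖_{(σ,p)} = r^{(σ,p)}(T)`. -/
theorem eigenvectors_are_critical_points
    {m d : ℕ} (hm : 0 < m) {N : Fin m → ℕ} (hN : ∀ k, 0 < N k)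
    (T : (∀ k, Fin (N k)) → ℝ)
    (σ : ShapePartition m d N) (p : Fin d → ℝ) (hp : ∀ i, 1 < p i)
    (hsym : σ.PartSymmetric T) :
    (∀ (lam : ℝ) (x : ∀ i, Fin (σ.n i) → ℝ), σ.IsEigenpair T p lam x →
      fderiv ℝ (σ.rayleigh T p) x = 0 ∧ σ.rayleigh T p x = lam) ∧
    σ.tnorm T p = σ.specRad T p := by
  constructor
  · intro lam x heig
    exact ShapePartition.eigen_crit hm σ T hsym p hp heig
  · exact ShapePartition.tnorm_eq_specRad hm hN T σ p hp hsym

end TensorPF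
end

section
/- Let T be a nonnegative tensor, σ a shape partition of T with d blocks, and fix any p ∈ (1,∞)^d. The following are equivalent: (i) T is σ-strongly irreducible; (ii) for every nonempty V ⊆ I^σ such that V_i := {l : (i,l) ∈ V} ≠ {1,…,n_i} for all i, there exist k ∈ {1,…,d} and indices j_1,…,j_m with T_{j_1,…,j_m} > 0, j_{s_k} ∈ V_k, j_t ∉ V_k for all t ∈ σ_k∖{s_k}, and j_t ∉ V_i for all t ∈ σ_i and i ≠ k; (iii) there exists N ≤ n_1+⋯+n_d − d such that for every j = (j_1,…,j_d) ∈ {1,…,n_1}×⋯×{1,…,n_d}, the iteration e^{l+1} = e^l + (𝒯_{s_1,·}((e^l)^[σ]),…,𝒯_{s_d,·}((e^l)^[σ])), started at the tuple e^0 whose i-th block is the j_i-th standard basis vector of ℝ^{n_i}, satisfies that e^N is entrywise positive; (iv) for every x^0 with all blocks in ℝ_+^{n_i} nonzero, there exists an integer N_{x} with x^{N_x} entrywise positive, where x^{l+1} = x^l + F^{(σ,p)}(x^l); (v) for every z with all blocks nonnegative and nonzero but z not entrywise positive, the zero set Q(F^{(σ,p)}(z)) = {(i,j) : F^{(σ,p)}_{i,j}(z)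 = 0} does not contain Q(z) = {(i,j) : z_{i,j} = 0}. -/
open scoped BigOperators

namespace TensorPF

section Helpers

variable {m d : ℕ} {N : Fin m → ℕ}

lemma tmap_nonneg {T : (∀ k, Fin (N k)) → ℝ}
    (hT : ∀ J, 0 ≤ T J) (k : Fin m) (j : Fin (N k)) {z : ∀ l, Fin (N l) → ℝ}
    (hz : ∀ l t, 0 ≤ z l t) : 0 ≤ tmap T k j z := by
  refine Finset.sum_nonneg fun J _ => ?_
  split
  · exact mul_nonneg (hT J) (Finset.prod_nonneg fun l _ => hz _ _)
  · exact le_refl _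

lemma tmap_pos_iff {T : (∀ k, Fin (N k)) → ℝ}
    (hT : ∀ J, 0 ≤ T J) (k : Fin m) (j : Fin (N k)) {z : ∀ l, Fin (N l) → ℝ}
    (hz : ∀ l t, 0 ≤ z l t) :
    0 < tmap T k j z ↔
      ∃ J : ∀ l, Fin (N l), J k = j ∧ 0 < T J ∧ ∀ l, l ≠ k → 0 < z l (J l) := by
  constructor
  · intro h
    obtain ⟨J, -, hne⟩ := Finset.exists_ne_zero_of_sum_ne_zero h.ne'
    by_cases hJk : J k = j
    · rw [if_pos hJk] at hne
      obtain ⟨hTJ, hprod⟩ := mul_ne_zero_iff.mp hne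
      refine ⟨J, hJk, (hT J).lt_of_ne' hTJ, fun l hl => ?_⟩
      have := Finset.prod_ne_zero_iff.mp hprod l (Finset.mem_erase.mpr ⟨hl, Finset.mem_univ l⟩)
      exact (hz l (J l)).lt_of_ne' this
    · simp [hJk] at hne
  · rintro ⟨J, hJk, hTJ, hpos⟩
    refine Finset.sum_pos' (fun J' _ => ?_) ⟨J, Finset.mem_univ J, ?_⟩
    · split
      · exact mul_nonneg (hT J') (Finset.prod_nonneg fun l _ => hz _ _)
      · exact le_refl _
    · rw [if_pos hJk]
      exact mul_pos hTJ (Finset.prod_pos fun l hl => hpos l (Finset.ne_of_mem_erase hl))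

lemma exists_pos_of_ne_zero {n : ℕ} {v : Fin n → ℝ} (h0 : ∀ j, 0 ≤ v j) (h : v ≠ 0) :
    ∃ j, 0 < v j := by
  by_contra hc; push_neg at hc
  exact h (funext fun j => le_antisymm (hc j) (h0 j))

lemma zero_pres (σ : ShapePartition m d N) {T : (∀ k, Fin (N k)) → ℝ} (hT : ∀ J, 0 ≤ T J)
    {x : ∀ i, Fin (σ.n i) → ℝ} (hx : ∀ i j, 0 ≤ x i j)
    (hnP : ∀ (k : Fin d) (l : Fin (σ.n k)), x k l = 0 →
      tmap T (σ.rep k) l (σ.blowup x) ≤ 0)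
    {e : ∀ i, Fin (σ.n i) → ℝ} (he0 : ∀ i j, 0 ≤ e i j)
    (he : ∀ i j, x i j = 0 → e i j = 0) :
    ∀ (i : Fin d) (j : Fin (σ.n i)), x i j = 0 →
      tmap T (σ.rep i) j (σ.blowup e) = 0 := by
  intro i j hxij
  by_contra h
  have hpos : 0 < tmap T (σ.rep i) j (σ.blowup e) :=
    (tmap_nonneg hT _ _ (fun l t => he0 _ _)).lt_of_ne' h
  obtain ⟨J, hJk, hTJ, hJpos⟩ := (tmap_pos_iff hT _ _ (fun l t => he0 _ _)).mp hpos
  have hxpos : 0 < tmap T (σ.rep i) j (σ.blowup x) := by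
    refine (tmap_pos_iff hT _ _ (fun l t => hx _ _)).mpr ⟨J, hJk, hTJ, fun t ht => ?_⟩
    have h1 : e (σ.β t) (Fin.cast (σ.dim_n t) (J t)) ≠ 0 := (hJpos t ht).ne'
    have h2 : x (σ.β t) (Fin.cast (σ.dim_n t) (J t)) ≠ 0 := fun h' => h1 (he _ _ h')
    exact (hx _ _).lt_of_ne' h2
  exact absurd hxpos (not_lt.mpr (hnP i j hxij))

lemma growth (σ : ShapePartition m d N) (hN : ∀ k, 0 < N k)
    {T : (∀ k, Fin (N k)) → ℝ} (hT : ∀ J, 0 ≤ T J)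
    (hSI : σ.StronglyIrreducible T)
    (g : (∀ i, Fin (σ.n i) → ℝ) → ∀ i, Fin (σ.n i) → ℝ)
    (hg0 : ∀ x, (∀ i j, 0 ≤ x i j) → ∀ i j, 0 ≤ g x i j)
    (hgpos : ∀ x, (∀ i j, 0 ≤ x i j) → ∀ (i : Fin d) (j : Fin (σ.n i)),
        0 < tmap T (σ.rep i) j (σ.blowup x) → 0 < g x i j)
    (e : ℕ → ∀ i, Fin (σ.n i) → ℝ)
    (h0 : ∀ i j, 0 ≤ e 0 i j) (hb : ∀ i, ∃ j, 0 < e 0 i j)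
    (hstep : ∀ l i j, e (l + 1) i j = e l i j + g (e l) i j) :
    ∀ L, (∑ i, σ.n i) - d ≤ L → ∀ i j, 0 < e L i j := by
  classical
  have hnn : ∀ l i j, 0 ≤ e l i j := by
    intro l
    induction l with
    | zero => exact h0
    | succ l ih => intro i j; rw [hstep]; exact add_nonneg (ih i j) (hg0 _ ih i j)
  have hmono : ∀ l i j, e l i j ≤ e (l + 1) i j := by
    intro l i j; rw [hstep]; exact le_add_of_nonneg_right (hg0 _ (hnn l) i j)
  have hle : ∀ l l', l ≤ l' → ∀ i j, e l i j ≤ e l' i j := by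
    intro l l' hll
    induction l', hll using Nat.le_induction with
    | base => exact fun i j => le_refl _
    | succ n hn ih => exact fun i j => (ih i j).trans (hmono n i j)
  have hbl : ∀ l i, ∃ j, 0 < e l i j := by
    intro l i
    obtain ⟨j, hj⟩ := hb i
    exact ⟨j, hj.trans_le (hle 0 l (Nat.zero_le l) i j)⟩
  have hposstep : ∀ l, (∀ i j, 0 < e l i j) → ∀ i j, 0 < e (l + 1) i j :=
    fun l h i j => (h i j).trans_le (hmono l i j)
  set S : ℕ → Finset (Σ i, Fin (σ.n i)) :=
    fun l => Finset.univ.filter fun a => 0 < e l a.1 a.2 with hS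
  have hSsub : ∀ l, S l ⊆ S (l + 1) := by
    intro l a ha
    simp only [hS, Finset.mem_filter, Finset.mem_univ, true_and] at ha ⊢
    exact ha.trans_le (hmono l a.1 a.2)
  have hcard0 : d ≤ (S 0).card := by
    choose f hf using hb
    have hmap : ∀ i ∈ (Finset.univ : Finset (Fin d)), (⟨i, f i⟩ : Σ i, Fin (σ.n i)) ∈ S 0 := by
      intro i _
      simp [hS, hf i]
    have := Finset.card_le_card_of_injOn _ hmap (fun a _ b _ h => congrArg Sigma.fst h)
    simpa using this
  have hcardle : ∀ l, (S l).card ≤ ∑ i, σ.n i := by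
    intro l
    have := Finset.card_le_card (Finset.subset_univ (S l))
    simpa [Fintype.card_sigma] using this
  have key : ∀ l, (∀ i j, 0 < e l i j) ∨ d + l ≤ (S l).card := by
    intro l
    induction l with
    | zero => exact Or.inr (by simpa using hcard0)
    | succ l ih =>
      rcases ih with hp | hc
      · exact Or.inl (hposstep l hp)
      by_cases hp1 : ∀ i j, 0 < e (l + 1) i j
      · exact Or.inl hp1
      have hpl : ¬ ∀ i j, 0 < e l i j := fun h => hp1 (hposstep l h)
      obtain ⟨k, t, hkt0, hktpos⟩ := hSI (e l) (hnn l)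
        (fun i hz => by
          obtain ⟨j, hj⟩ := hbl l i
          rw [hz] at hj
          exact absurd hj (by simp)) hpl
      have hmem : (⟨k, t⟩ : Σ i, Fin (σ.n i)) ∈ S (l + 1) := by
        simp only [hS, Finset.mem_filter, Finset.mem_univ, true_and]
        rw [hstep, hkt0, zero_add]
        exact hgpos (e l) (hnn l) k t hktpos
      have hnmem : (⟨k, t⟩ : Σ i, Fin (σ.n i)) ∉ S l := by
        simp [hS, hkt0]
      have hlt : (S l).card < (S (l + 1)).card :=
        Finset.card_lt_card ((Finset.ssubset_iff_of_subset (hSsub l)).mpr ⟨⟨k, t⟩, hmem, hnmem⟩)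
      exact Or.inr (by omega)
  have hdtot : d ≤ ∑ i, σ.n i := by
    calc d = ∑ _i : Fin d, 1 := by simp
    _ ≤ ∑ i, σ.n i := Finset.sum_le_sum fun i _ => hN (σ.rep i)
  have hposL0 : ∀ i j, 0 < e ((∑ i, σ.n i) - d) i j := by
    rcases key ((∑ i, σ.n i) - d) with hp | hc
    · exact hp
    intro i j
    have hcardeq : (S ((∑ i, σ.n i) - d)).card = Fintype.card (Σ i, Fin (σ.n i)) := by
      have h1 := hcardle ((∑ i, σ.n i) - d)
      simp only [Fintype.card_sigma, Fintype.card_fin]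
      omega
    have huniv := Finset.eq_univ_of_card (S ((∑ i, σ.n i) - d)) hcardeq
    have hm : (⟨i, j⟩ : Σ i, Fin (σ.n i)) ∈ S ((∑ i, σ.n i) - d) := by
      rw [huniv]; exact Finset.mem_univ _
    simpa [hS] using hm
  have haux : ∀ k, ∀ i j, 0 < e ((∑ i, σ.n i) - d + k) i j := by
    intro k
    induction k with
    | zero => exact hposL0
    | succ k ih => exact hposstep _ ih
  intro L hL i j
  obtain ⟨k, rfl⟩ := Nat.exists_eq_add_of_le hL
  exact haux k i j

end Helpers

/-- characterizations of σ-strong irreducibility (Lemma 6.6 of the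
paper): the definition (i) is equivalent to (ii) the combinatorial condition on
proper index subsets, (iii) positivity of the additive `𝒯`-iteration started at any
tuple of standard basis vectors after at most `n₁+⋯+n_d − d` steps, (iv) eventual
positivity of the additive `F^{(σ,p)}`-iteration from any nonnegative tuple with
nonzero blocks, and (v) the zero-set of `F^{(σ,p)}(z)` never contains that of `z`. -/
theorem stronglyIrreducible_characterizations
    {m d : ℕ} (hm : 0 < m) {N : Fin m → ℕ} (hN : ∀ k, 0 < N k)
    (T : (∀ k, Fin (N k)) → ℝ) (hT : ∀ J, 0 ≤ T J)
    (σ : ShapePartition m d N) (p : Fin d → ℝ) (hp : ∀ i, 1 < p i) :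
    (σ.StronglyIrreducible T ↔
      ∀ V : Set (Σ i, Fin (σ.n i)), V.Nonempty →
        (∀ i : Fin d, ∃ l : Fin (σ.n i), (⟨i, l⟩ : Σ i, Fin (σ.n i)) ∉ V) →
        ∃ (k : Fin d) (J : ∀ l, Fin (N l)), 0 < T J ∧
          (⟨k, J (σ.rep k)⟩ : Σ i, Fin (σ.n i)) ∈ V ∧
          (∀ t : Fin m, σ.β t = k → t ≠ σ.rep k →
            (⟨σ.β t, Fin.cast (σ.dim_n t) (J t)⟩ : Σ i, Fin (σ.n i)) ∉ V) ∧
          (∀ t : Fin m, σ.β t ≠ k →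
            (⟨σ.β t, Fin.cast (σ.dim_n t) (J t)⟩ : Σ i, Fin (σ.n i)) ∉ V)) ∧
    (σ.StronglyIrreducible T ↔
      ∃ Nsteps : ℕ, Nsteps ≤ (∑ i, σ.n i) - d ∧
        ∀ jj : ∀ i : Fin d, Fin (σ.n i),
          ∀ e : ℕ → ∀ i, Fin (σ.n i) → ℝ,
            (e 0 = fun i l => if l = jj i then 1 else 0) →
            (∀ l, e (l + 1) =
              fun i t => e l i t + tmap T (σ.rep i) t (σ.blowup (e l))) →
            ∀ i t, 0 < e Nsteps i t) ∧
    (σ.StronglyIrreducible T ↔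
      ∀ x0 : ∀ i, Fin (σ.n i) → ℝ, (∀ i j, 0 ≤ x0 i j) → (∀ i, x0 i ≠ 0) →
        ∃ Nx : ℕ, ∀ xs : ℕ → ∀ i, Fin (σ.n i) → ℝ, xs 0 = x0 →
          (∀ l, xs (l + 1) = fun i j => xs l i j + σ.Fmap T p (xs l) i j) →
          ∀ i j, 0 < xs Nx i j) ∧
    (σ.StronglyIrreducible T ↔
      ∀ z : ∀ i, Fin (σ.n i) → ℝ, (∀ i j, 0 ≤ z i j) → (∀ i, z i ≠ 0) →
        ¬ (∀ i j, 0 < z i j) →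
        ¬ ({a : Σ i, Fin (σ.n i) | z a.1 a.2 = 0} ⊆
            {a : Σ i, Fin (σ.n i) | σ.Fmap T p z a.1 a.2 = 0})) := by
  classical
  have hexp : ∀ i, 0 < p i / (p i - 1) - 1 := by
    intro i
    have h1 : 0 < p i - 1 := sub_pos.mpr (hp i)
    have h2 : 1 < p i / (p i - 1) := (one_lt_div h1).mpr (by linarith)
    linarith
  have hFpos : ∀ (x : ∀ i, Fin (σ.n i) → ℝ) (i : Fin d) (j : Fin (σ.n i)),
      0 < tmap T (σ.rep i) j (σ.blowup x) → 0 < σ.Fmap T p x i j := by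
    intro x i j h
    exact Real.rpow_pos_of_pos h _
  have hFnonneg : ∀ (x : ∀ i, Fin (σ.n i) → ℝ), (∀ i j, 0 ≤ x i j) →
      ∀ (i : Fin d) (j : Fin (σ.n i)), 0 ≤ σ.Fmap T p x i j := by
    intro x hx i j
    exact Real.rpow_nonneg (tmap_nonneg hT _ _ fun l t => hx _ _) _
  have hFzero : ∀ (x : ∀ i, Fin (σ.n i) → ℝ) (i : Fin d) (j : Fin (σ.n i)),
      tmap T (σ.rep i) j (σ.blowup x) = 0 → σ.Fmap T p x i j = 0 := by
    intro x i j h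
    show (tmap T (σ.rep i) j (σ.blowup x)) ^ (p i / (p i - 1) - 1) = 0
    rw [h]
    exact Real.zero_rpow (hexp i).ne'
  have hzero_of_np : ∀ (x : ∀ i, Fin (σ.n i) → ℝ), (∀ i j, 0 ≤ x i j) →
      ¬ (∀ i j, 0 < x i j) → ∃ i j, x i j = 0 := by
    intro x hx hnp
    push_neg at hnp
    obtain ⟨i, j, h⟩ := hnp
    exact ⟨i, j, le_antisymm h (hx i j)⟩
  refine ⟨⟨?_, ?_⟩, ⟨?_, ?_⟩, ⟨?_, ?_⟩, ⟨?_, ?_⟩⟩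
  -- (i) → (ii)
  · intro hSI V hVne hVprop
    set x : ∀ i, Fin (σ.n i) → ℝ :=
      fun i l => if (⟨i, l⟩ : Σ i, Fin (σ.n i)) ∈ V then 0 else 1 with hxdef
    have hxnn : ∀ i j, 0 ≤ x i j := by
      intro i j; simp only [hxdef]; split <;> norm_num
    have hxnz : ∀ i, x i ≠ 0 := by
      intro i
      obtain ⟨l, hl⟩ := hVprop i
      intro h
      have := congrFun h l
      simp [hxdef, hl] at this
    have hxnp : ¬ ∀ i j, 0 < x i j := by
      obtain ⟨a, ha⟩ := hVne
      intro h
      have := h a.1 a.2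
      simp [hxdef, ha] at this
    obtain ⟨k, l, hkl0, hklpos⟩ := hSI x hxnn hxnz hxnp
    have hklV : (⟨k, l⟩ : Σ i, Fin (σ.n i)) ∈ V := by
      by_contra hc
      simp [hxdef, hc] at hkl0
    obtain ⟨J, hJk, hTJ, hJpos⟩ := (tmap_pos_iff hT _ _ fun l' t => hxnn _ _).mp hklpos
    have hxposV : ∀ t : Fin m, t ≠ σ.rep k →
        (⟨σ.β t, Fin.cast (σ.dim_n t) (J t)⟩ : Σ i, Fin (σ.n i)) ∉ V := by
      intro t ht hmem
      have hb := hJpos t ht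
      have hz : x (σ.β t) (Fin.cast (σ.dim_n t) (J t)) = 0 := by
        simp [hxdef, hmem]
      rw [hz] at hb
      exact lt_irrefl _ hb
    refine ⟨k, J, hTJ, ?_, ?_, ?_⟩
    · rw [show J (σ.rep k) = l from hJk]
      exact hklV
    · intro t _ htrep
      exact hxposV t htrep
    · intro t htk
      exact hxposV t (fun h => htk (by rw [h, σ.rep_mem]))
  -- (ii) → (i)
  · intro hII x hxnn hxnz hxnp
    set V : Set (Σ i, Fin (σ.n i)) := {a | x a.1 a.2 = 0} with hVdef
    have hVne : V.Nonempty := by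
      obtain ⟨i, j, h⟩ := hzero_of_np x hxnn hxnp
      exact ⟨⟨i, j⟩, h⟩
    have hVprop : ∀ i, ∃ l, (⟨i, l⟩ : Σ i, Fin (σ.n i)) ∉ V := by
      intro i
      obtain ⟨j, hj⟩ := exists_pos_of_ne_zero (hxnn i) (hxnz i)
      exact ⟨j, hj.ne'⟩
    obtain ⟨k, J, hTJ, hmem, h3, h4⟩ := hII V hVne hVprop
    refine ⟨k, J (σ.rep k), hmem, ?_⟩
    refine (tmap_pos_iff hT _ _ fun l t => hxnn _ _).mpr ⟨J, rfl, hTJ, fun t ht => ?_⟩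
    have hnm : (⟨σ.β t, Fin.cast (σ.dim_n t) (J t)⟩ : Σ i, Fin (σ.n i)) ∉ V := by
      by_cases hbt : σ.β t = k
      · exact h3 t hbt ht
      · exact h4 t hbt
    have hne : x (σ.β t) (Fin.cast (σ.dim_n t) (J t)) ≠ 0 := hnm
    exact (hxnn _ _).lt_of_ne' hne
  -- (i) → (iii)
  · intro hSI
    refine ⟨(∑ i, σ.n i) - d, le_refl _, ?_⟩
    intro jj e he0 hestep
    refine growth σ hN hT hSI (fun x i t => tmap T (σ.rep i) t (σ.blowup x))
      (fun x hx i j => tmap_nonneg hT _ _ fun l t => hx _ _)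
      (fun x hx i j h => h) e ?_ ?_ ?_ _ (le_refl _)
    · intro i j
      simp only [he0]
      split <;> norm_num
    · intro i
      refine ⟨jj i, ?_⟩
      simp [he0]
    · intro l i j
      simp only [hestep l]
  -- (iii) → (i)
  · rintro ⟨Nsteps, -, hprop⟩ x hxnn hxnz hxnp
    by_contra hP
    push_neg at hP
    choose f hf using fun i => exists_pos_of_ne_zero (hxnn i) (hxnz i)
    obtain ⟨e, he0, hesucc⟩ :
        ∃ e : ℕ → ∀ i, Fin (σ.n i) → ℝ,
          (e 0 = fun i l => if l = f i then 1 else 0) ∧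
          ∀ l, e (l + 1) = fun i t => e l i t + tmap T (σ.rep i) t (σ.blowup (e l)) := by
      refine ⟨fun l => (fun y => fun i t => y i t + tmap T (σ.rep i) t (σ.blowup y))^[l]
        (fun i l => if l = f i then 1 else 0), rfl, fun l => ?_⟩
      exact Function.iterate_succ_apply' _ _ _
    have hpos := hprop f e he0 hesucc
    have hinv : ∀ l, (∀ i j, 0 ≤ e l i j) ∧ (∀ i j, x i j = 0 → e l i j = 0) := by
      intro l
      induction l with
      | zero =>
        constructor
        · intro i j
          simp only [he0]
          split <;> norm_num
        · intro i j hxij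
          have hne : j ≠ f i := fun h => by rw [h] at hxij; exact (hf i).ne' hxij
          simp [he0, hne]
      | succ l ih =>
        have hz := zero_pres σ hT hxnn hP ih.1 ih.2
        constructor
        · intro i j
          simp only [hesucc l]
          exact add_nonneg (ih.1 i j) (tmap_nonneg hT _ _ fun l' t => ih.1 _ _)
        · intro i j hxij
          simp only [hesucc l]
          rw [ih.2 i j hxij, hz i j hxij, add_zero]
    obtain ⟨i0, j0, hij0⟩ := hzero_of_np x hxnn hxnp
    have h1 := hpos i0 j0
    rw [(hinv Nsteps).2 i0 j0 hij0] at h1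
    exact lt_irrefl _ h1
  -- (i) → (iv)
  · intro hSI x0 hx0nn hx0nz
    refine ⟨(∑ i, σ.n i) - d, ?_⟩
    intro xs hxs0 hxsstep i j
    refine growth σ hN hT hSI (σ.Fmap T p)
      (fun x hx i j => hFnonneg x hx i j)
      (fun x hx i j h => hFpos x i j h) xs ?_ ?_ ?_ _ (le_refl _) i j
    · intro i j
      rw [hxs0]
      exact hx0nn i j
    · intro i
      obtain ⟨j, hj⟩ := exists_pos_of_ne_zero (hx0nn i) (hx0nz i)
      refine ⟨j, ?_⟩
      rw [hxs0]
      exact hj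
    · intro l i j
      simp only [hxsstep l]
  -- (iv) → (i)
  · intro hIV x hxnn hxnz hxnp
    by_contra hP
    push_neg at hP
    obtain ⟨Nx, hprop⟩ := hIV x hxnn hxnz
    obtain ⟨e, he0, hesucc⟩ :
        ∃ e : ℕ → ∀ i, Fin (σ.n i) → ℝ,
          e 0 = x ∧ ∀ l, e (l + 1) = fun i j => e l i j + σ.Fmap T p (e l) i j := by
      refine ⟨fun l => (fun y => fun i j => y i j + σ.Fmap T p y i j)^[l] x, rfl, fun l => ?_⟩
      exact Function.iterate_succ_apply' _ _ _
    have hpos := hprop e he0 hesucc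
    have hinv : ∀ l, (∀ i j, 0 ≤ e l i j) ∧ (∀ i j, x i j = 0 → e l i j = 0) := by
      intro l
      induction l with
      | zero =>
        rw [he0]
        exact ⟨hxnn, fun i j h => h⟩
      | succ l ih =>
        have hz := zero_pres σ hT hxnn hP ih.1 ih.2
        constructor
        · intro i j
          simp only [hesucc l]
          exact add_nonneg (ih.1 i j) (hFnonneg (e l) ih.1 i j)
        · intro i j hxij
          simp only [hesucc l]
          rw [ih.2 i j hxij, hFzero (e l) i j (hz i j hxij), add_zero]
    obtain ⟨i0, j0, hij0⟩ := hzero_of_np x hxnn hxnp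
    have h1 := hpos i0 j0
    rw [(hinv Nx).2 i0 j0 hij0] at h1
    exact lt_irrefl _ h1
  -- (i) → (v)
  · intro hSI z hznn hznz hznp hsub
    obtain ⟨k, l, h0, hpos⟩ := hSI z hznn hznz hznp
    have hmem : (⟨k, l⟩ : Σ i, Fin (σ.n i)) ∈ {a : Σ i, Fin (σ.n i) | z a.1 a.2 = 0} := h0
    have := hsub hmem
    exact (hFpos z k l hpos).ne' this
  -- (v) → (i)
  · intro hV x hxnn hxnz hxnp
    by_contra hP
    push_neg at hP
    refine hV x hxnn hxnz hxnp ?_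
    intro a ha
    have h0 : tmap T (σ.rep a.1) a.2 (σ.blowup x) = 0 :=
      le_antisymm (hP a.1 a.2 ha) (tmap_nonneg hT _ _ fun l t => hxnn _ _)
    exact hFzero x a.1 a.2 h0

end TensorPF
end
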